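/- arXiv:1311.7584 — 4 statements merged into one kernel-verified Lean document; each statement's English description precedes it below -/
import Mathlib

section
/- Let U, V be random variables on a finite probability space and suppose Q is a random variable that is both a deterministic function of U and a deterministic function of V (almost surely). Then H(Q) ≤ I(U;V). -/
open scoped BigOperators

noncomputable section

/-- Probability that the random variable `X` takes the value `a`,
with respect to the probability mass function `p` on the finite sample space `Ω`. -/
def prob {Ω : Type*} [Fintype Ω] {α : Type*} [DecidableEq α]
    (p : Ω → ℝ) (X : Ω → α) (a : α) : ℝ :=
  ∑ ω, if X ω = a then p ω else 0

/-- Shannon entropy (base 2) of the random variable `X`. -/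
def ent {Ω : Type*} [Fintype Ω] {α : Type*} [Fintype α] [DecidableEq α]
    (p : Ω → ℝ) (X : Ω → α) : ℝ :=
  -∑ a, prob p X a * Real.logb 2 (prob p X a)

/-- Conditional entropy `H(X|Y)`. -/
def condEnt {Ω : Type*} [Fintype Ω] {α β : Type*} [Fintype α] [DecidableEq α]
    [Fintype β] [DecidableEq β] (p : Ω → ℝ) (X : Ω → α) (Y : Ω → β) : ℝ :=
  ent p (fun ω => (X ω, Y ω)) - ent p Y

/-- Mutual information `I(X;Y)`. -/
def mi {Ω : Type*} [Fintype Ω] {α β : Type*} [Fintype α] [DecidableEq α]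
    [Fintype β] [DecidableEq β] (p : Ω → ℝ) (X : Ω → α) (Y : Ω → β) : ℝ :=
  ent p X + ent p Y - ent p (fun ω => (X ω, Y ω))

/-- Conditional mutual information `I(X;Y|Z)`. -/
def cmi {Ω : Type*} [Fintype Ω] {α β γ : Type*} [Fintype α] [DecidableEq α]
    [Fintype β] [DecidableEq β] [Fintype γ] [DecidableEq γ]
    (p : Ω → ℝ) (X : Ω → α) (Y : Ω → β) (Z : Ω → γ) : ℝ :=
  ent p (fun ω => (X ω, Z ω)) + ent p (fun ω => (Y ω, Z ω))
    - ent p (fun ω => (X ω, Y ω, Z ω)) - ent p Z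

set_option linter.unusedSectionVars false
section aux
variable {Ω : Type*} [Fintype Ω] {α : Type*} [Fintype α] [DecidableEq α]

lemma prob_nonneg (p : Ω → ℝ) (hp : ∀ ω, 0 ≤ p ω) (X : Ω → α) (a : α) :
    0 ≤ prob p X a := by
  apply Finset.sum_nonneg
  intro ω _
  split <;> simp [hp ω]

lemma self_le_prob (p : Ω → ℝ) (hp : ∀ ω, 0 ≤ p ω) (X : Ω → α) (ω : Ω) :
    p ω ≤ prob p X (X ω) := by
  have := Finset.single_le_sum (f := fun ω' => if X ω' = X ω then p ω' else 0)
    (fun i _ => by split <;> simp [hp i]) (Finset.mem_univ ω)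
  simpa [prob] using this

lemma prob_pos (p : Ω → ℝ) (hp : ∀ ω, 0 ≤ p ω) (X : Ω → α) (ω : Ω) (hω : p ω ≠ 0) :
    0 < prob p X (X ω) :=
  lt_of_lt_of_le ((hp ω).lt_of_ne' hω) (self_le_prob p hp X ω)

lemma sum_prob_mul (p : Ω → ℝ) (X : Ω → α) (g : α → ℝ) :
    ∑ a, prob p X a * g a = ∑ ω, p ω * g (X ω) := by
  unfold prob
  simp_rw [Finset.sum_mul, ite_mul, zero_mul]
  rw [Finset.sum_comm]
  congr 1
  ext ω
  rw [Finset.sum_ite_eq Finset.univ (X ω) (fun a => p ω * g a)]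
  simp

lemma prob_congr (p : Ω → ℝ) (X Y : Ω → α) (h : ∀ ω, p ω ≠ 0 → X ω = Y ω) :
    prob p X = prob p Y := by
  funext a
  apply Finset.sum_congr rfl
  intro ω _
  by_cases hω : p ω = 0
  · simp [hω]
  · rw [h ω hω]

lemma exists_of_prob_ne_zero (p : Ω → ℝ) (X : Ω → α) (a : α) (h : prob p X a ≠ 0) :
    ∃ ω, p ω ≠ 0 ∧ X ω = a := by
  by_contra hc
  push_neg at hc
  apply h
  apply Finset.sum_eq_zero
  intro ω _
  by_cases hω : p ω = 0
  · simp [hω]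
  · simp [hc ω hω]

lemma ent_omega (p : Ω → ℝ) (X : Ω → α) :
    ent p X = -∑ ω, p ω * Real.logb 2 (prob p X (X ω)) := by
  rw [ent, sum_prob_mul p X (fun a => Real.logb 2 (prob p X a))]

lemma sum_prob (p : Ω → ℝ) (X : Ω → α) : ∑ a, prob p X a = ∑ ω, p ω := by
  have := sum_prob_mul p X (fun _ => 1)
  simpa using this

end aux

theorem stmt1 {Ω : Type*} [Fintype Ω] {α β γ : Type*}
    [Fintype α] [DecidableEq α] [Fintype β] [DecidableEq β] [Fintype γ] [DecidableEq γ]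
    (p : Ω → ℝ) (hp : ∀ ω, 0 ≤ p ω) (hsum : ∑ ω, p ω = 1)
    (U : Ω → α) (V : Ω → β) (Q : Ω → γ)
    (f : α → γ) (hf : ∀ ω, p ω ≠ 0 → Q ω = f (U ω))
    (g : β → γ) (hg : ∀ ω, p ω ≠ 0 → Q ω = g (V ω)) :
    ent p Q ≤ mi p U V := by
  have hlog2 : (0:ℝ) < Real.log 2 := Real.log_pos (by norm_num)
  have hQg : prob p Q = prob p (fun ω => g (V ω)) := prob_congr p _ _ hg
  -- marginal of g(V) equals distribution of Q
  have sum_pV : ∀ c : γ, (∑ v, if g v = c then prob p V v else 0) = prob p Q c := by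
    intro c
    have h1 := sum_prob_mul p V (fun v => if g v = c then (1:ℝ) else 0)
    simp only [mul_ite, mul_one, mul_zero] at h1
    rw [h1, hQg]
    rfl
  -- the T bound
  have hT : (∑ u, ∑ v, if g v = f u then prob p U u * prob p V v / prob p Q (f u) else 0)
      ≤ 1 := by
    have step1 : (∑ u, ∑ v, if g v = f u then prob p U u * prob p V v / prob p Q (f u) else 0)
        = ∑ u, prob p U u / prob p Q (f u) * prob p Q (f u) := by
      apply Finset.sum_congr rfl
      intro u _
      rw [← sum_pV (f u), Finset.mul_sum]
      apply Finset.sum_congr rfl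
      intro v _
      split
      · ring
      · ring
    rw [step1]
    calc (∑ u, prob p U u / prob p Q (f u) * prob p Q (f u)) ≤ ∑ u, prob p U u := by
          apply Finset.sum_le_sum
          intro u _
          by_cases h : prob p Q (f u) = 0
          · simp [h, prob_nonneg p hp U u]
          · rw [div_mul_cancel₀ _ h]
      _ = ∑ ω, p ω := sum_prob p U
      _ = 1 := hsum
  -- the S bound
  have hS : (∑ ω, p ω * (prob p U (U ω) * prob p V (V ω) /
      (prob p (fun ω => (U ω, V ω)) (U ω, V ω) * prob p Q (Q ω)))) ≤ 1 := by
    have h2 : (∑ ω, p ω * (prob p U (U ω) * prob p V (V ω) /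
        (prob p (fun ω => (U ω, V ω)) (U ω, V ω) * prob p Q (Q ω))))
        = ∑ x : α × β, prob p (fun ω => (U ω, V ω)) x * (prob p U x.1 * prob p V x.2 /
            (prob p (fun ω => (U ω, V ω)) x * prob p Q (f x.1))) := by
      rw [sum_prob_mul p (fun ω => (U ω, V ω)) (fun x => prob p U x.1 * prob p V x.2 /
            (prob p (fun ω => (U ω, V ω)) x * prob p Q (f x.1)))]
      apply Finset.sum_congr rfl
      intro ω _
      by_cases hω : p ω = 0
      · simp [hω]
      · rw [hf ω hω]
    rw [h2]
    calc (∑ x : α × β, prob p (fun ω => (U ω, V ω)) x * (prob p U x.1 * prob p V x.2 /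
            (prob p (fun ω => (U ω, V ω)) x * prob p Q (f x.1))))
        ≤ ∑ x : α × β, (if g x.2 = f x.1 then prob p U x.1 * prob p V x.2 / prob p Q (f x.1) else 0) := by
          apply Finset.sum_le_sum
          intro x _
          by_cases hx : prob p (fun ω => (U ω, V ω)) x = 0
          · rw [hx, zero_mul]
            split
            · exact div_nonneg (mul_nonneg (prob_nonneg p hp U x.1) (prob_nonneg p hp V x.2))
                (prob_nonneg p hp Q (f x.1))
            · exact le_rfl
          · obtain ⟨ω, hω, hXω⟩ := exists_of_prob_ne_zero p (fun ω => (U ω, V ω)) x hx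
            have hU1 : U ω = x.1 := congrArg Prod.fst hXω
            have hV2 : V ω = x.2 := congrArg Prod.snd hXω
            have hgf : g x.2 = f x.1 := by
              rw [← hU1, ← hV2, ← hf ω hω, ← hg ω hω]
            rw [if_pos hgf]
            by_cases hq : prob p Q (f x.1) = 0
            · simp [hq]
            · have heq : prob p (fun ω => (U ω, V ω)) x * (prob p U x.1 * prob p V x.2 /
                  (prob p (fun ω => (U ω, V ω)) x * prob p Q (f x.1)))
                  = prob p U x.1 * prob p V x.2 / prob p Q (f x.1) := by
                field_simp
              rw [heq]
      _ ≤ 1 := by rw [Fintype.sum_prod_type]; exact hT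
  -- expand mi - ent via ω-sums
  have key : mi p U V - ent p Q = ∑ ω, p ω *
      (Real.logb 2 (prob p (fun ω => (U ω, V ω)) (U ω, V ω)) + Real.logb 2 (prob p Q (Q ω))
        - Real.logb 2 (prob p U (U ω)) - Real.logb 2 (prob p V (V ω))) := by
    rw [mi, ent_omega p U, ent_omega p V, ent_omega p (fun ω => (U ω, V ω)), ent_omega p Q]
    simp only [mul_add, mul_sub]
    rw [Finset.sum_sub_distrib, Finset.sum_sub_distrib, Finset.sum_add_distrib]
    ring
  -- termwise log bound
  have bound : ∀ ω ∈ Finset.univ (α := Ω), p ω * ((1 - prob p U (U ω) * prob p V (V ω) /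
        (prob p (fun ω => (U ω, V ω)) (U ω, V ω) * prob p Q (Q ω))) / Real.log 2)
      ≤ p ω * (Real.logb 2 (prob p (fun ω => (U ω, V ω)) (U ω, V ω)) + Real.logb 2 (prob p Q (Q ω))
        - Real.logb 2 (prob p U (U ω)) - Real.logb 2 (prob p V (V ω))) := by
    intro ω _
    by_cases hω : p ω = 0
    · simp [hω]
    · have hA : 0 < prob p U (U ω) := prob_pos p hp U ω hω
      have hB : 0 < prob p V (V ω) := prob_pos p hp V ω hω
      have hC : 0 < prob p (fun ω => (U ω, V ω)) (U ω, V ω) :=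
        prob_pos p hp (fun ω => (U ω, V ω)) ω hω
      have hD : 0 < prob p Q (Q ω) := prob_pos p hp Q ω hω
      set A := prob p U (U ω)
      set B := prob p V (V ω)
      set C := prob p (fun ω => (U ω, V ω)) (U ω, V ω)
      set D := prob p Q (Q ω)
      have hx : 0 < A * B / (C * D) := by positivity
      have hcomb : Real.logb 2 (A * B / (C * D))
          = Real.logb 2 A + Real.logb 2 B - (Real.logb 2 C + Real.logb 2 D) := by
        rw [Real.logb_div (by positivity) (by positivity),
          Real.logb_mul hA.ne' hB.ne', Real.logb_mul hC.ne' hD.ne']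
      have hlogx : Real.log (A * B / (C * D)) ≤ A * B / (C * D) - 1 :=
        Real.log_le_sub_one_of_pos hx
      have h1 : (1 - A * B / (C * D)) / Real.log 2 ≤ -(Real.logb 2 (A * B / (C * D))) := by
        rw [Real.logb, ← neg_div]
        exact (div_le_div_iff_of_pos_right hlog2).mpr (by linarith)
      have h2 : -(Real.logb 2 (A * B / (C * D)))
          = Real.logb 2 C + Real.logb 2 D - Real.logb 2 A - Real.logb 2 B := by
        rw [hcomb]; ring
      apply mul_le_mul_of_nonneg_left _ (hp ω)
      rw [← h2]
      exact h1
  have main := Finset.sum_le_sum bound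
  have lhs_eq : (∑ ω, p ω * ((1 - prob p U (U ω) * prob p V (V ω) /
        (prob p (fun ω => (U ω, V ω)) (U ω, V ω) * prob p Q (Q ω))) / Real.log 2))
      = (1 - ∑ ω, p ω * (prob p U (U ω) * prob p V (V ω) /
        (prob p (fun ω => (U ω, V ω)) (U ω, V ω) * prob p Q (Q ω)))) / Real.log 2 := by
    rw [Finset.sum_congr rfl (fun ω _ => by ring :
      ∀ ω ∈ Finset.univ (α := Ω), p ω * ((1 - prob p U (U ω) * prob p V (V ω) /
        (prob p (fun ω => (U ω, V ω)) (U ω, V ω) * prob p Q (Q ω))) / Real.log 2)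
        = (p ω - p ω * (prob p U (U ω) * prob p V (V ω) /
        (prob p (fun ω => (U ω, V ω)) (U ω, V ω) * prob p Q (Q ω)))) / Real.log 2),
      ← Finset.sum_div, Finset.sum_sub_distrib, hsum]
  have hpos : 0 ≤ (1 - ∑ ω, p ω * (prob p U (U ω) * prob p V (V ω) /
        (prob p (fun ω => (U ω, V ω)) (U ω, V ω) * prob p Q (Q ω)))) / Real.log 2 :=
    div_nonneg (by linarith) hlog2.le
  rw [lhs_eq] at main
  linarith [main, key]
end
end

section
/- Let A, B, C, D be finite-valued random variables. If I(A; D | B, C) = 0 and I(A; C) ≥ I(A; C | B), then I(A; C) ≥ I(A; C | (B, D)). -/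
open scoped BigOperators

noncomputable section

namespace Aux3

variable {ι κ : Type*} [Fintype ι] [Fintype κ] [DecidableEq κ]

/-- marginal / pushforward of a weight function along `g`. -/
def mg (q : ι → ℝ) (g : ι → κ) : κ → ℝ := fun k => ∑ i, if g i = k then q i else 0

def H (q : ι → ℝ) : ℝ := -∑ i, q i * Real.logb 2 (q i)

lemma mg_nonneg (q : ι → ℝ) (hq : ∀ i, 0 ≤ q i) (g : ι → κ) (k : κ) : 0 ≤ mg q g k := by
  unfold mg
  refine Finset.sum_nonneg fun i _ => ?_
  split
  · exact hq i
  · exact le_rfl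

lemma le_mg (q : ι → ℝ) (hq : ∀ i, 0 ≤ q i) (g : ι → κ) (i : ι) : q i ≤ mg q g (g i) := by
  classical
  have := Finset.single_le_sum (f := fun j => if g j = g i then q j else 0)
    (fun j _ => by split; exacts [hq j, le_rfl]) (Finset.mem_univ i)
  simpa [mg] using this

lemma sum_mg (q : ι → ℝ) (g : ι → κ) : ∑ k, mg q g k = ∑ i, q i := by
  unfold mg
  rw [Finset.sum_comm]
  simp [Finset.sum_ite_eq]

lemma sum_mg_mul (q : ι → ℝ) (g : ι → κ) (L : κ → ℝ) :
    ∑ k, mg q g k * L k = ∑ i, q i * L (g i) := by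
  unfold mg
  simp_rw [Finset.sum_mul, ite_mul, zero_mul]
  rw [Finset.sum_comm]
  simp [Finset.sum_ite_eq]

lemma H_mg (q : ι → ℝ) (g : ι → κ) :
    H (mg q g) = -∑ i, q i * Real.logb 2 (mg q g (g i)) := by
  unfold H
  rw [sum_mg_mul q g (fun k => Real.logb 2 (mg q g k))]

lemma mg_mg (q : ι → ℝ) {μ : Type*} [Fintype μ] [DecidableEq μ] (g : ι → κ) (h : κ → μ) :
    mg (mg q g) h = mg q (fun i => h (g i)) := by
  funext m
  unfold mg
  have key : ∀ k, (if h k = m then ∑ i, (if g i = k then q i else 0) else 0)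
      = ∑ i, (if g i = k then (if h k = m then q i else 0) else 0) := by
    intro k
    by_cases hk : h k = m <;> simp [hk]
  simp_rw [key]
  rw [Finset.sum_comm]
  simp [Finset.sum_ite_eq]

lemma ent_eq {Ω : Type*} [Fintype Ω] {α : Type*} [Fintype α] [DecidableEq α]
    (p : Ω → ℝ) (X : Ω → α) : ent p X = H (mg p X) := rfl

lemma ent_comp {Ω : Type*} [Fintype Ω] {α β : Type*} [Fintype α] [DecidableEq α]
    [Fintype β] [DecidableEq β] (p : Ω → ℝ) (X : Ω → α) (g : α → β) :
    ent p (fun ω => g (X ω)) = H (mg (mg p X) g) := by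
  rw [ent_eq, mg_mg]

lemma mg_apply_inj (q : ι → ℝ) {g : ι → κ} (hg : Function.Injective g) (i : ι) :
    mg q g (g i) = q i := by
  unfold mg
  rw [Finset.sum_eq_single i (fun j _ hj => if_neg (fun h => hj (hg h)))
    (fun hi => absurd (Finset.mem_univ i) hi)]
  simp

lemma ent_comp_inj {Ω : Type*} [Fintype Ω] {α β : Type*} [Fintype α] [DecidableEq α]
    [Fintype β] [DecidableEq β] (p : Ω → ℝ) (X : Ω → α) (g : α → β)
    (hg : Function.Injective g) :
    ent p (fun ω => g (X ω)) = ent p X := by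
  rw [ent_comp, H_mg, ent_eq, H]
  congr 1
  refine Finset.sum_congr rfl fun a _ => ?_
  rw [mg_apply_inj _ hg]

section Key
variable {α β γ : Type*} [Fintype α] [DecidableEq α] [Fintype β] [DecidableEq β]
  [Fintype γ] [DecidableEq γ]

lemma key (q : α × β × γ → ℝ) (hq : ∀ i, 0 ≤ q i) (hq1 : ∑ i, q i = 1) :
    H (mg q (fun i => (i.1, i.2.2))) + H (mg q (fun i => (i.2.1, i.2.2)))
      - H q - H (mg q (fun i => i.2.2)) ≥ 0 := by
  classical
  set g₁ : α × β × γ → α × γ := fun i => (i.1, i.2.2) with hg₁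
  set g₂ : α × β × γ → β × γ := fun i => (i.2.1, i.2.2) with hg₂
  set g₃ : α × β × γ → γ := fun i => i.2.2 with hg₃
  set m₁ := mg q g₁ with hm₁
  set m₂ := mg q g₂ with hm₂
  set m₃ := mg q g₃ with hm₃
  -- marginal consistency
  have hx : ∀ z : γ, ∑ x : α, m₁ (x, z) = m₃ z := by
    intro z
    rw [hm₁, hm₃]
    unfold mg
    rw [Finset.sum_comm]
    refine Finset.sum_congr rfl fun i _ => ?_
    simp [hg₁, hg₃, Prod.ext_iff, ite_and, Finset.sum_ite_eq']
  have hy : ∀ z : γ, ∑ y : β, m₂ (y, z) = m₃ z := by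
    intro z
    rw [hm₂, hm₃]
    unfold mg
    rw [Finset.sum_comm]
    refine Finset.sum_congr rfl fun i _ => ?_
    simp [hg₂, hg₃, Prod.ext_iff, ite_and, Finset.sum_ite_eq']
  have hm₁0 : ∀ k, 0 ≤ m₁ k := mg_nonneg q hq g₁
  have hm₂0 : ∀ k, 0 ≤ m₂ k := mg_nonneg q hq g₂
  have hm₃0 : ∀ k, 0 ≤ m₃ k := mg_nonneg q hq g₃
  set r : α × β × γ → ℝ := fun i =>
    if m₃ (g₃ i) = 0 then 0 else m₁ (g₁ i) * m₂ (g₂ i) / m₃ (g₃ i) with hr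
  have hr0 : ∀ i, 0 ≤ r i := by
    intro i
    rw [hr]
    dsimp only
    split
    · exact le_rfl
    · exact div_nonneg (mul_nonneg (hm₁0 _) (hm₂0 _)) (hm₃0 _)
  -- sum of r is at most 1
  have hrsum : ∑ i, r i ≤ 1 := by
    have hz : ∀ z : γ, (∑ x : α, ∑ y : β, r (x, y, z)) ≤ m₃ z := by
      intro z
      by_cases h : m₃ z = 0
      · have hz0 : ∀ (x : α) (y : β), r (x, y, z) = 0 := fun x y => if_pos h
        simp [hz0, hm₃0 z]
      · have hrv : ∀ (x : α) (y : β), r (x, y, z) = m₁ (x, z) * m₂ (y, z) / m₃ z :=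
          fun x y => if_neg h
        simp_rw [hrv, div_eq_mul_inv, ← Finset.sum_mul, ← Finset.mul_sum]
        rw [← Finset.sum_mul, hx z, hy z, mul_assoc, mul_inv_cancel₀ h, mul_one]
    calc ∑ i, r i = ∑ x : α, ∑ y : β, ∑ z : γ, r (x, y, z) := by
          rw [Fintype.sum_prod_type]
          exact Finset.sum_congr rfl fun x _ => Fintype.sum_prod_type _
      _ = ∑ x : α, ∑ z : γ, ∑ y : β, r (x, y, z) :=
          Finset.sum_congr rfl fun x _ => Finset.sum_comm
      _ = ∑ z : γ, ∑ x : α, ∑ y : β, r (x, y, z) := Finset.sum_comm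
      _ ≤ ∑ z : γ, m₃ z := Finset.sum_le_sum fun z _ => hz z
      _ = 1 := by rw [hm₃, sum_mg, hq1]
  -- pointwise bound
  have hpt : ∀ i, q i * (Real.logb 2 (m₁ (g₁ i)) + Real.logb 2 (m₂ (g₂ i))
      - Real.logb 2 (q i) - Real.logb 2 (m₃ (g₃ i))) ≤ (r i - q i) / Real.log 2 := by
    intro i
    rcases eq_or_lt_of_le (hq i) with h0 | h0
    · rw [← h0]
      simp only [zero_mul, sub_zero]
      exact div_nonneg (by simpa using hr0 i) (Real.log_nonneg one_le_two)
    · have hq3 : 0 < m₃ (g₃ i) := lt_of_lt_of_le h0 (le_mg q hq g₃ i)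
      have hq1' : 0 < m₁ (g₁ i) := lt_of_lt_of_le h0 (le_mg q hq g₁ i)
      have hq2' : 0 < m₂ (g₂ i) := lt_of_lt_of_le h0 (le_mg q hq g₂ i)
      have hri : r i = m₁ (g₁ i) * m₂ (g₂ i) / m₃ (g₃ i) := by
        rw [hr]; exact if_neg hq3.ne'
      have hrpos : 0 < r i := by
        rw [hri]; exact div_pos (mul_pos hq1' hq2') hq3
      have hlog2 : 0 < Real.log 2 := Real.log_pos one_lt_two
      have heq : Real.logb 2 (m₁ (g₁ i)) + Real.logb 2 (m₂ (g₂ i))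
          - Real.logb 2 (q i) - Real.logb 2 (m₃ (g₃ i))
          = Real.log (r i / q i) / Real.log 2 := by
        rw [Real.log_div hrpos.ne' h0.ne', hri,
          Real.log_div (mul_pos hq1' hq2').ne' hq3.ne',
          Real.log_mul hq1'.ne' hq2'.ne']
        simp only [Real.logb]
        ring
      rw [heq]
      have hlog := Real.log_le_sub_one_of_pos (div_pos hrpos h0)
      have h2 : q i * (Real.log (r i / q i) / Real.log 2)
          ≤ q i * ((r i / q i - 1) / Real.log 2) := by
        apply mul_le_mul_of_nonneg_left _ (le_of_lt h0)
        exact div_le_div_of_nonneg_right hlog hlog2.le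
      refine h2.trans (le_of_eq ?_)
      field_simp
  -- assemble
  rw [H_mg, H_mg, H_mg, H]
  have hsum : ∑ i, q i * (Real.logb 2 (m₁ (g₁ i)) + Real.logb 2 (m₂ (g₂ i))
      - Real.logb 2 (q i) - Real.logb 2 (m₃ (g₃ i))) ≤ 0 := by
    calc ∑ i, q i * (Real.logb 2 (m₁ (g₁ i)) + Real.logb 2 (m₂ (g₂ i))
          - Real.logb 2 (q i) - Real.logb 2 (m₃ (g₃ i)))
        ≤ ∑ i, (r i - q i) / Real.log 2 := Finset.sum_le_sum fun i _ => hpt i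
      _ = (∑ i, r i - 1) / Real.log 2 := by
          rw [← Finset.sum_div, Finset.sum_sub_distrib, hq1]
      _ ≤ 0 := div_nonpos_of_nonpos_of_nonneg (by linarith) (Real.log_nonneg one_le_two)
  have expand : ∑ i, q i * (Real.logb 2 (m₁ (g₁ i)) + Real.logb 2 (m₂ (g₂ i))
      - Real.logb 2 (q i) - Real.logb 2 (m₃ (g₃ i)))
      = ∑ i, q i * Real.logb 2 (m₁ (g₁ i)) + ∑ i, q i * Real.logb 2 (m₂ (g₂ i))
        - ∑ i, q i * Real.logb 2 (q i) - ∑ i, q i * Real.logb 2 (m₃ (g₃ i)) := by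
    rw [show (∑ i, q i * Real.logb 2 (m₁ (g₁ i)) + ∑ i, q i * Real.logb 2 (m₂ (g₂ i))
        - ∑ i, q i * Real.logb 2 (q i) - ∑ i, q i * Real.logb 2 (m₃ (g₃ i)))
        = ∑ i, (q i * Real.logb 2 (m₁ (g₁ i)) + q i * Real.logb 2 (m₂ (g₂ i))
          - q i * Real.logb 2 (q i) - q i * Real.logb 2 (m₃ (g₃ i))) by
      rw [Finset.sum_sub_distrib, Finset.sum_sub_distrib, Finset.sum_add_distrib]]
    exact Finset.sum_congr rfl fun i _ => by ring
  rw [expand] at hsum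
  linarith

end Key


lemma cmi_nonneg {Ω : Type*} [Fintype Ω] {α β γ : Type*} [Fintype α] [DecidableEq α]
    [Fintype β] [DecidableEq β] [Fintype γ] [DecidableEq γ]
    (p : Ω → ℝ) (hp : ∀ ω, 0 ≤ p ω) (hsum : ∑ ω, p ω = 1)
    (X : Ω → α) (Y : Ω → β) (Z : Ω → γ) : 0 ≤ cmi p X Y Z := by
  classical
  set q := mg p (fun ω => (X ω, Y ω, Z ω)) with hqdef
  have e0 : ent p (fun ω => (X ω, Y ω, Z ω)) = H q := ent_eq p _
  have e1 : ent p (fun ω => (X ω, Z ω)) = H (mg q (fun i => (i.1, i.2.2))) :=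
    ent_comp p (fun ω => (X ω, Y ω, Z ω)) (fun i => (i.1, i.2.2))
  have e2 : ent p (fun ω => (Y ω, Z ω)) = H (mg q (fun i => (i.2.1, i.2.2))) :=
    ent_comp p (fun ω => (X ω, Y ω, Z ω)) (fun i => (i.2.1, i.2.2))
  have e3 : ent p Z = H (mg q (fun i => i.2.2)) :=
    ent_comp p (fun ω => (X ω, Y ω, Z ω)) (fun i => i.2.2)
  have hk := key q (mg_nonneg p hp _) (by rw [hqdef, sum_mg]; exact hsum)
  unfold cmi
  rw [e0, e1, e2, e3]
  linarith

end Aux3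

theorem stmt3 {Ω : Type*} [Fintype Ω] {α β γ δ : Type*}
    [Fintype α] [DecidableEq α] [Fintype β] [DecidableEq β]
    [Fintype γ] [DecidableEq γ] [Fintype δ] [DecidableEq δ]
    (p : Ω → ℝ) (hp : ∀ ω, 0 ≤ p ω) (hsum : ∑ ω, p ω = 1)
    (A : Ω → α) (B : Ω → β) (C : Ω → γ) (D : Ω → δ)
    (h1 : cmi p A D (fun ω => (B ω, C ω)) = 0)
    (h2 : mi p A C ≥ cmi p A C B) :
    mi p A C ≥ cmi p A C (fun ω => (B ω, D ω)) := by
  classical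
  have h3 : 0 ≤ cmi p A D B := Aux3.cmi_nonneg p hp hsum A D B
  have e1 : ent p (fun ω => (A ω, B ω, D ω)) = ent p (fun ω => (A ω, D ω, B ω)) :=
    Aux3.ent_comp_inj p (fun ω => (A ω, D ω, B ω)) (fun x => (x.1, x.2.2, x.2.1))
      (by rintro ⟨a, d, b⟩ ⟨a', d', b'⟩ h; simp_all [Prod.ext_iff])
  have e2 : ent p (fun ω => (C ω, B ω, D ω)) = ent p (fun ω => (D ω, B ω, C ω)) :=
    Aux3.ent_comp_inj p (fun ω => (D ω, B ω, C ω)) (fun x => (x.2.2, x.2.1, x.1))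
      (by rintro ⟨a, d, b⟩ ⟨a', d', b'⟩ h; simp_all [Prod.ext_iff])
  have e3 : ent p (fun ω => (A ω, C ω, B ω, D ω)) = ent p (fun ω => (A ω, D ω, B ω, C ω)) :=
    Aux3.ent_comp_inj p (fun ω => (A ω, D ω, B ω, C ω))
      (fun x => (x.1, x.2.2.2, x.2.2.1, x.2.1))
      (by rintro ⟨a, d, b, c⟩ ⟨a', d', b', c'⟩ h; simp_all [Prod.ext_iff])
  have e4 : ent p (fun ω => (B ω, D ω)) = ent p (fun ω => (D ω, B ω)) :=
    Aux3.ent_comp_inj p (fun ω => (D ω, B ω)) (fun x => (x.2, x.1))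
      (by rintro ⟨a, d⟩ ⟨a', d'⟩ h; simp_all [Prod.ext_iff])
  have e5 : ent p (fun ω => (A ω, C ω, B ω)) = ent p (fun ω => (A ω, B ω, C ω)) :=
    Aux3.ent_comp_inj p (fun ω => (A ω, B ω, C ω)) (fun x => (x.1, x.2.2, x.2.1))
      (by rintro ⟨a, b, c⟩ ⟨a', b', c'⟩ h; simp_all [Prod.ext_iff])
  have e6 : ent p (fun ω => (C ω, B ω)) = ent p (fun ω => (B ω, C ω)) :=
    Aux3.ent_comp_inj p (fun ω => (B ω, C ω)) (fun x => (x.2, x.1))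
      (by rintro ⟨a, b⟩ ⟨a', b'⟩ h; simp_all [Prod.ext_iff])
  simp only [cmi, mi] at h1 h2 h3 ⊢
  linarith
end
end

section
/- Let X, Y, Z, M₁₂, M₂₃, M₃₁ be finite-valued random variables satisfying: (i) H(X | M₁₂, M₃₁) = 0, H(Y | M₁₂, M₂₃) = 0, H(Z | M₂₃, M₃₁) = 0; (ii) I(M₁₂, M₃₁ ; Y, Z | X) = 0 (privacy against Alice); and (iii) I(M₂₃, M₃₁ ; X, Y | Z) = 0 (privacy against Charlie). Then H(M₂₃) ≥ RI(X; Z) + H(Y, Z | X), where RI(X;Z) denotes the residual information, defined as the infimum over all pairs of functions (f,g) with f(X) = g(Z) almost surely of I(X; Z | f(X)). -/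
open scoped BigOperators

noncomputable section

/-- Residual information `RI(A;B)`: the infimum of `I(A;B | f(A))` over all pairs of
functions `(f,g)` such that `f(A) = g(B)` almost surely. -/
def RI {Ω : Type*} [Fintype Ω] {α β : Type*} [Fintype α] [DecidableEq α]
    [Fintype β] [DecidableEq β] (p : Ω → ℝ) (A : Ω → α) (B : Ω → β) : ℝ :=
  sInf {r : ℝ | ∃ (f : α → α) (g : β → α),
    (∀ ω, p ω ≠ 0 → f (A ω) = g (B ω)) ∧ r = cmi p A B (fun ω => f (A ω))}

namespace Stmt9Aux

open Finset

variable {Ω : Type*} [Fintype Ω] {α β γ κ τ : Type*}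

section Basic

variable (p : Ω → ℝ)

lemma prob_nonneg (hp : ∀ ω, 0 ≤ p ω) [DecidableEq α] (W : Ω → α) (a : α) :
    0 ≤ prob p W a := by
  apply Finset.sum_nonneg
  intro ω _
  split <;> simp [hp ω]

lemma prob_comp_eq_sum [Fintype τ] [DecidableEq τ] [DecidableEq κ]
    (T : Ω → τ) (pr : τ → κ) (k : κ) :
    prob p (fun ω => pr (T ω)) k = ∑ t, if pr t = k then prob p T t else 0 := by
  unfold prob
  rw [eq_comm]
  calc ∑ t, (if pr t = k then ∑ ω, if T ω = t then p ω else 0 else 0)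
      = ∑ t, ∑ ω, (if T ω = t then if pr t = k then p ω else 0 else 0) := by
        apply Finset.sum_congr rfl; intro t _
        split
        · apply Finset.sum_congr rfl; intro ω _; split <;> simp_all
        · rw [eq_comm]; apply Finset.sum_eq_zero; intro ω _; split <;> simp_all
    _ = ∑ ω, ∑ t, (if T ω = t then if pr t = k then p ω else 0 else 0) := Finset.sum_comm
    _ = ∑ ω, (if pr (T ω) = k then p ω else 0) := by
        apply Finset.sum_congr rfl; intro ω _
        rw [Finset.sum_ite_eq Finset.univ (T ω) (fun t => if pr t = k then p ω else 0)]
        simp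

lemma le_prob_comp (hp : ∀ ω, 0 ≤ p ω) [Fintype τ] [DecidableEq τ] [DecidableEq κ]
    (T : Ω → τ) (pr : τ → κ) (t : τ) :
    prob p T t ≤ prob p (fun ω => pr (T ω)) (pr t) := by
  rw [prob_comp_eq_sum p T pr (pr t)]
  have := Finset.single_le_sum (f := fun t' => if pr t' = pr t then prob p T t' else 0)
    (fun t' _ => by split <;> simp [prob_nonneg p hp]) (Finset.mem_univ t)
  simpa using this

lemma prob_comp_inj [DecidableEq τ] [DecidableEq κ]
    {e : τ → κ} (he : Function.Injective e) (T : Ω → τ) (t : τ) :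
    prob p (fun ω => e (T ω)) (e t) = prob p T t := by
  unfold prob
  apply Finset.sum_congr rfl
  intro ω _
  congr 1
  simp [he.eq_iff]

lemma sum_prob (hsum : ∑ ω, p ω = 1) [Fintype α] [DecidableEq α] (W : Ω → α) :
    ∑ a, prob p W a = 1 := by
  unfold prob
  rw [Finset.sum_comm]
  rw [← hsum]
  apply Finset.sum_congr rfl
  intro ω _
  simp

lemma prob_congr [DecidableEq α] {W W' : Ω → α}
    (h : ∀ ω, p ω ≠ 0 → W ω = W' ω) (a : α) :
    prob p W a = prob p W' a := by
  unfold prob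
  apply Finset.sum_congr rfl
  intro ω _
  by_cases hω : p ω = 0
  · simp [hω]
  · rw [h ω hω]

lemma ent_congr [Fintype α] [DecidableEq α] {W W' : Ω → α}
    (h : ∀ ω, p ω ≠ 0 → W ω = W' ω) :
    ent p W = ent p W' := by
  unfold ent
  congr 1
  apply Finset.sum_congr rfl
  intro a _
  rw [prob_congr p h]

lemma prob_comp_ne_zero (hp : ∀ ω, 0 ≤ p ω) [Fintype τ] [DecidableEq τ] [DecidableEq κ]
    (T : Ω → τ) (pr : τ → κ) (t : τ) (ht : prob p T t ≠ 0) :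
    prob p (fun ω => pr (T ω)) (pr t) ≠ 0 := by
  have h1 := le_prob_comp p hp T pr t
  have h0 := prob_nonneg p hp T t
  intro h
  rw [h] at h1
  exact ht (le_antisymm h1 h0)

lemma ent_comp_inj [Fintype α] [DecidableEq α] [Fintype κ] [DecidableEq κ]
    {e : α → κ} (he : Function.Injective e) (W : Ω → α) :
    ent p (fun ω => e (W ω)) = ent p W := by
  unfold ent
  congr 1
  rw [show (Finset.univ : Finset κ) = Finset.univ \ (Finset.univ.image e) ∪ Finset.univ.image e by
    simp [Finset.sdiff_union_of_subset]]
  rw [Finset.sum_union (Finset.sdiff_disjoint)]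
  have hz : ∀ k ∈ Finset.univ \ Finset.univ.image e,
      prob p (fun ω => e (W ω)) k * Real.logb 2 (prob p (fun ω => e (W ω)) k) = 0 := by
    intro k hk
    have : prob p (fun ω => e (W ω)) k = 0 := by
      unfold prob
      apply Finset.sum_eq_zero
      intro ω _
      have : e (W ω) ≠ k := by
        intro h
        simp only [Finset.mem_sdiff, Finset.mem_univ, Finset.mem_image, true_and] at hk
        exact hk ⟨W ω, h⟩
      simp [this]
    rw [this]; simp
  rw [Finset.sum_eq_zero hz, zero_add]
  rw [Finset.sum_image (fun x _ y _ h => he h)]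
  apply Finset.sum_congr rfl
  intro a _
  rw [prob_comp_inj p he]

lemma ent_proj [Fintype τ] [DecidableEq τ] [Fintype κ] [DecidableEq κ]
    (T : Ω → τ) (pr : τ → κ) :
    ent p (fun ω => pr (T ω)) =
      -∑ t, prob p T t * Real.logb 2 (prob p (fun ω => pr (T ω)) (pr t)) := by
  unfold ent
  congr 1
  calc ∑ k, prob p (fun ω => pr (T ω)) k * Real.logb 2 (prob p (fun ω => pr (T ω)) k)
      = ∑ k, (∑ t, if pr t = k then prob p T t else 0) * Real.logb 2 (prob p (fun ω => pr (T ω)) k) := by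
        apply Finset.sum_congr rfl; intro k _; rw [prob_comp_eq_sum]
    _ = ∑ k, ∑ t, (if pr t = k then prob p T t * Real.logb 2 (prob p (fun ω => pr (T ω)) k) else 0) := by
        apply Finset.sum_congr rfl; intro k _
        rw [Finset.sum_mul]
        apply Finset.sum_congr rfl; intro t _
        split <;> simp
    _ = ∑ t, ∑ k, (if pr t = k then prob p T t * Real.logb 2 (prob p (fun ω => pr (T ω)) k) else 0) := Finset.sum_comm
    _ = ∑ t, prob p T t * Real.logb 2 (prob p (fun ω => pr (T ω)) (pr t)) := by
        apply Finset.sum_congr rfl; intro t _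
        rw [Finset.sum_ite_eq Finset.univ (pr t)]
        simp

end Basic

section Core

variable (p : Ω → ℝ)
variable [Fintype α] [DecidableEq α] [Fintype β] [DecidableEq β] [Fintype γ] [DecidableEq γ]

lemma cmi_expand (A : Ω → α) (B : Ω → β) (C : Ω → γ) :
    cmi p A B C = ∑ t : α × β × γ,
      prob p (fun ω => (A ω, B ω, C ω)) t *
        (Real.logb 2 (prob p (fun ω => (A ω, B ω, C ω)) t)
          + Real.logb 2 (prob p C t.2.2)
          - Real.logb 2 (prob p (fun ω => (A ω, C ω)) (t.1, t.2.2))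
          - Real.logb 2 (prob p (fun ω => (B ω, C ω)) t.2)) := by
  have hT : ent p (fun ω => (A ω, B ω, C ω)) =
      -∑ t : α × β × γ, prob p (fun ω => (A ω, B ω, C ω)) t *
        Real.logb 2 (prob p (fun ω => (A ω, B ω, C ω)) t) := rfl
  have hAC : ent p (fun ω => (A ω, C ω)) =
      -∑ t : α × β × γ, prob p (fun ω => (A ω, B ω, C ω)) t *
        Real.logb 2 (prob p (fun ω => (A ω, C ω)) (t.1, t.2.2)) :=
    ent_proj p (fun ω => (A ω, B ω, C ω)) (fun t => (t.1, t.2.2))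
  have hBC : ent p (fun ω => (B ω, C ω)) =
      -∑ t : α × β × γ, prob p (fun ω => (A ω, B ω, C ω)) t *
        Real.logb 2 (prob p (fun ω => (B ω, C ω)) t.2) :=
    ent_proj p (fun ω => (A ω, B ω, C ω)) (fun t => t.2)
  have hC : ent p C =
      -∑ t : α × β × γ, prob p (fun ω => (A ω, B ω, C ω)) t *
        Real.logb 2 (prob p C t.2.2) :=
    ent_proj p (fun ω => (A ω, B ω, C ω)) (fun t => t.2.2)
  unfold cmi
  rw [hT, hAC, hBC, hC]
  simp only [mul_add, mul_sub]
  rw [Finset.sum_sub_distrib, Finset.sum_sub_distrib, Finset.sum_add_distrib]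
  ring

lemma sum_rotate3 [Fintype α] [Fintype β] [Fintype γ] (f : α → β → γ → ℝ) :
    ∑ a, ∑ b, ∑ c, f a b c = ∑ c, ∑ a, ∑ b, f a b c := by
  calc ∑ a, ∑ b, ∑ c, f a b c
      = ∑ a, ∑ c, ∑ b, f a b c := by
        apply Finset.sum_congr rfl; intro a _; exact Finset.sum_comm
    _ = ∑ c, ∑ a, ∑ b, f a b c := Finset.sum_comm

lemma marg_fst_eq (A : Ω → α) (C : Ω → γ) (c : γ) :
    ∑ a, prob p (fun ω => (A ω, C ω)) (a, c) = prob p C c := by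
  have h := prob_comp_eq_sum p (fun ω => (A ω, C ω)) Prod.snd c
  have h2 : prob p (fun ω => ((A ω, C ω)).2) c = prob p C c := rfl
  rw [h2] at h
  rw [h, Fintype.sum_prod_type]
  apply Finset.sum_congr rfl
  intro a _
  rw [Finset.sum_ite_eq' Finset.univ c (fun c' => prob p (fun ω => (A ω, C ω)) (a, c'))]
  simp

lemma cmi_core (hp : ∀ ω, 0 ≤ p ω) (hsum : ∑ ω, p ω = 1)
    (A : Ω → α) (B : Ω → β) (C : Ω → γ) :
    0 ≤ cmi p A B C ∧
      (cmi p A B C = 0 → ∀ a b c,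
        prob p (fun ω => (A ω, B ω, C ω)) (a, b, c) * prob p C c =
          prob p (fun ω => (A ω, C ω)) (a, c) * prob p (fun ω => (B ω, C ω)) (b, c)) := by
  classical
  set pT := prob p (fun ω => (A ω, B ω, C ω)) with hpT
  set pAC := prob p (fun ω => (A ω, C ω)) with hpAC
  set pBC := prob p (fun ω => (B ω, C ω)) with hpBC
  set pC := prob p C with hpC
  -- nonnegativity of all probabilities
  have hTnn : ∀ t, 0 ≤ pT t := prob_nonneg p hp _
  have hACnn : ∀ w, 0 ≤ pAC w := prob_nonneg p hp _
  have hBCnn : ∀ w, 0 ≤ pBC w := prob_nonneg p hp _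
  have hCnn : ∀ c, 0 ≤ pC c := prob_nonneg p hp _
  -- marginal bounds
  have hm1 : ∀ t : α × β × γ, pT t ≤ pAC (t.1, t.2.2) := fun t =>
    le_prob_comp p hp (fun ω => (A ω, B ω, C ω)) (fun t => (t.1, t.2.2)) t
  have hm2 : ∀ t : α × β × γ, pT t ≤ pBC t.2 := fun t =>
    le_prob_comp p hp (fun ω => (A ω, B ω, C ω)) (fun t => t.2) t
  have hm3 : ∀ t : α × β × γ, pT t ≤ pC t.2.2 := fun t =>
    le_prob_comp p hp (fun ω => (A ω, B ω, C ω)) (fun t => t.2.2) t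
  have hm6 : ∀ (a : α) (c : γ), pAC (a, c) ≤ pC c := fun a c =>
    le_prob_comp p hp (fun ω => (A ω, C ω)) (fun w => w.2) (a, c)
  have hm7 : ∀ (b : β) (c : γ), pBC (b, c) ≤ pC c := fun b c =>
    le_prob_comp p hp (fun ω => (B ω, C ω)) (fun w => w.2) (b, c)
  have hmargA : ∀ c, ∑ a, pAC (a, c) = pC c := marg_fst_eq p A C
  have hmargB : ∀ c, ∑ b, pBC (b, c) = pC c := marg_fst_eq p B C
  -- the q function
  set q : α × β × γ → ℝ := fun t => pAC (t.1, t.2.2) * pBC t.2 / pC t.2.2 with hq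
  have hqnn : ∀ t, 0 ≤ q t := fun t =>
    div_nonneg (mul_nonneg (hACnn _) (hBCnn _)) (hCnn _)
  set S : Finset (α × β × γ) := Finset.univ.filter (fun t => pT t ≠ 0) with hS
  set S' : Finset (α × β × γ) := Finset.univ.filter (fun t => pC t.2.2 ≠ 0) with hS'
  have hSS' : S ⊆ S' := by
    intro t ht
    simp only [hS, hS', Finset.mem_filter, Finset.mem_univ, true_and] at *
    intro h0
    exact ht (le_antisymm (h0 ▸ hm3 t) (hTnn t))
  -- positivity on S
  have hposT : ∀ t ∈ S, 0 < pT t := by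
    intro t ht
    simp only [hS, Finset.mem_filter, Finset.mem_univ, true_and] at ht
    exact lt_of_le_of_ne (hTnn t) (Ne.symm ht)
  have hposAC : ∀ t ∈ S, 0 < pAC (t.1, t.2.2) := fun t ht => lt_of_lt_of_le (hposT t ht) (hm1 t)
  have hposBC : ∀ t ∈ S, 0 < pBC t.2 := fun t ht => lt_of_lt_of_le (hposT t ht) (hm2 t)
  have hposC : ∀ t ∈ S, 0 < pC t.2.2 := fun t ht => lt_of_lt_of_le (hposT t ht) (hm3 t)
  have hposq : ∀ t ∈ S, 0 < q t := fun t ht =>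
    div_pos (mul_pos (hposAC t ht) (hposBC t ht)) (hposC t ht)
  -- sum of pT over S is 1
  have hsumT : ∑ t ∈ S, pT t = 1 := by
    rw [Finset.sum_filter_ne_zero]
    exact sum_prob p hsum _
  -- sum of q over S' equals 1
  have hsumq' : ∑ t ∈ S', q t = 1 := by
    rw [hS', Finset.sum_filter]
    rw [Fintype.sum_prod_type]
    rw [show ∀ f : α → ℝ, (∑ a, f a) = ∑ a, f a from fun _ => rfl]
    have hswap : (∑ a, ∑ w : β × γ, if pC (a, w).2.2 ≠ 0 then q (a, w) else 0)
        = ∑ a, ∑ b, ∑ c, (if pC c ≠ 0 then q (a, b, c) else 0) := by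
      apply Finset.sum_congr rfl; intro a _
      rw [Fintype.sum_prod_type]
    rw [hswap]
    have hswap2 : (∑ a, ∑ b, ∑ c : γ, (if pC c ≠ 0 then q (a, b, c) else 0))
        = ∑ c, ∑ a, ∑ b, (if pC c ≠ 0 then q (a, b, c) else 0) :=
      sum_rotate3 _
    rw [hswap2]
    have hinner : ∀ c, (∑ a, ∑ b, (if pC c ≠ 0 then q (a, b, c) else 0)) = pC c := by
      intro c
      by_cases h0 : pC c = 0
      · simp [h0]
      · simp only [h0, ne_eq, not_false_iff, if_true]
        have : (∑ a, ∑ b, q (a, b, c)) = (∑ a, ∑ b, pAC (a, c) * pBC (b, c)) / pC c := by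
          rw [Finset.sum_div]
          apply Finset.sum_congr rfl; intro a _
          rw [Finset.sum_div]
        rw [this]
        have : (∑ a, ∑ b, pAC (a, c) * pBC (b, c)) = pC c * pC c := by
          calc (∑ a, ∑ b, pAC (a, c) * pBC (b, c))
              = ∑ a, pAC (a, c) * (∑ b, pBC (b, c)) := by
                apply Finset.sum_congr rfl; intro a _; rw [Finset.mul_sum]
            _ = (∑ a, pAC (a, c)) * (∑ b, pBC (b, c)) := by rw [Finset.sum_mul]
            _ = pC c * pC c := by rw [hmargA, hmargB]
        rw [this]
        field_simp
    rw [Finset.sum_congr rfl (fun c _ => hinner c)]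
    exact sum_prob p hsum C
  -- per-term inequality on S
  have key : ∀ t ∈ S, pT t - q t ≤ pT t * Real.log (pT t)
      - pT t * Real.log (q t) := by
    intro t ht
    have h1 : Real.log (q t / pT t) ≤ q t / pT t - 1 :=
      Real.log_le_sub_one_of_pos (div_pos (hposq t ht) (hposT t ht))
    have h2 : Real.log (q t / pT t) = Real.log (q t) - Real.log (pT t) :=
      Real.log_div (ne_of_gt (hposq t ht)) (ne_of_gt (hposT t ht))
    rw [h2] at h1
    have h3 := mul_le_mul_of_nonneg_left h1 (le_of_lt (hposT t ht))
    have hne : pT t ≠ 0 := ne_of_gt (hposT t ht)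
    have h4 : pT t * (q t / pT t - 1) = q t - pT t := by
      field_simp
    rw [h4] at h3
    linarith [h3]
  have hlog2 : (0:ℝ) < Real.log 2 := Real.log_pos (by norm_num)
  have hexp : cmi p A B C * Real.log 2
      = ∑ t ∈ S, (pT t * Real.log (pT t) - pT t * Real.log (q t)) := by
    rw [cmi_expand p A B C, Finset.sum_mul]
    rw [← Finset.sum_filter_of_ne (s := Finset.univ)
      (p := fun t => pT t ≠ 0)
      (f := fun t => pT t *
        (Real.logb 2 (pT t) + Real.logb 2 (pC t.2.2)
          - Real.logb 2 (pAC (t.1, t.2.2)) - Real.logb 2 (pBC t.2)) * Real.log 2)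
      (by intro t _ h h0; apply h; simp [h0])]
    apply Finset.sum_congr rfl
    intro t ht
    have e1 : Real.log (q t) = Real.log (pAC (t.1, t.2.2)) + Real.log (pBC t.2)
        - Real.log (pC t.2.2) := by
      have : q t = pAC (t.1, t.2.2) * pBC t.2 / pC t.2.2 := rfl
      rw [this, Real.log_div (ne_of_gt (mul_pos (hposAC t ht) (hposBC t ht)))
        (ne_of_gt (hposC t ht)),
        Real.log_mul (ne_of_gt (hposAC t ht)) (ne_of_gt (hposBC t ht))]
    rw [e1]
    simp only [Real.logb]
    field_simp
    ring
  have hqS_le : ∑ t ∈ S, q t ≤ 1 := by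
    rw [← hsumq']
    exact Finset.sum_le_sum_of_subset_of_nonneg hSS' (fun t _ _ => hqnn t)
  have hlower : (1 : ℝ) - ∑ t ∈ S, q t ≤ cmi p A B C * Real.log 2 := by
    rw [hexp]
    calc (1:ℝ) - ∑ t ∈ S, q t = ∑ t ∈ S, (pT t - q t) := by
          rw [Finset.sum_sub_distrib, hsumT]
      _ ≤ ∑ t ∈ S, (pT t * Real.log (pT t) - pT t * Real.log (q t)) :=
          Finset.sum_le_sum key
  have hnn : 0 ≤ cmi p A B C := by
    nlinarith [hqS_le, hlower, hlog2]
  refine ⟨hnn, ?_⟩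
  intro hzero a b c
  have hsum0 : ∑ t ∈ S, (pT t * Real.log (pT t) - pT t * Real.log (q t)) = 0 := by
    rw [← hexp, hzero, zero_mul]
  -- deduce each D t = 0 and sum of q over S is 1
  have hD : ∑ t ∈ S, ((pT t * Real.log (pT t) - pT t * Real.log (q t)) - (pT t - q t))
      = (∑ t ∈ S, q t) - 1 := by
    rw [Finset.sum_sub_distrib, hsum0, Finset.sum_sub_distrib, hsumT]
    ring
  have hDnn : ∀ t ∈ S,
      0 ≤ (pT t * Real.log (pT t) - pT t * Real.log (q t)) - (pT t - q t) := by
    intro t ht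
    have := key t ht
    linarith
  have hqS1 : ∑ t ∈ S, q t = 1 := by
    have h1 : 0 ≤ (∑ t ∈ S, q t) - 1 := hD ▸ Finset.sum_nonneg hDnn
    linarith
  have hDzero : ∀ t ∈ S,
      (pT t * Real.log (pT t) - pT t * Real.log (q t)) - (pT t - q t) = 0 := by
    have : ∑ t ∈ S, ((pT t * Real.log (pT t) - pT t * Real.log (q t)) - (pT t - q t)) = 0 := by
      rw [hD, hqS1]; ring
    exact fun t ht => (Finset.sum_eq_zero_iff_of_nonneg hDnn).mp this t ht
  have hqT : ∀ t ∈ S, q t = pT t := by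
    intro t ht
    by_contra hne
    have hx : q t / pT t ≠ 1 := by
      intro h
      exact hne ((div_eq_one_iff_eq (ne_of_gt (hposT t ht))).mp h)
    have hstrict := Real.log_lt_sub_one_of_pos (div_pos (hposq t ht) (hposT t ht)) hx
    have h2 : Real.log (q t / pT t) = Real.log (q t) - Real.log (pT t) :=
      Real.log_div (ne_of_gt (hposq t ht)) (ne_of_gt (hposT t ht))
    rw [h2] at hstrict
    have h3 := mul_lt_mul_of_pos_left hstrict (hposT t ht)
    have hne' : pT t ≠ 0 := ne_of_gt (hposT t ht)
    have h4 : pT t * (q t / pT t - 1) = q t - pT t := by field_simp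
    rw [h4] at h3
    have := hDzero t ht
    nlinarith [h3, this]
  have hqzero : ∀ t ∈ S', t ∉ S → q t = 0 := by
    have hsdiff : ∑ t ∈ S' \ S, q t = 0 := by
      rw [Finset.sum_sdiff_eq_sub hSS', hsumq', hqS1]
      ring
    intro t ht hts
    exact (Finset.sum_eq_zero_iff_of_nonneg (fun t _ => hqnn t)).mp hsdiff t
      (Finset.mem_sdiff.mpr ⟨ht, hts⟩)
  -- now conclude for (a, b, c)
  set t : α × β × γ := (a, b, c) with htdef
  by_cases hc : pC c = 0
  · have h1 : pT t = 0 := le_antisymm (hc ▸ hm3 t) (hTnn t)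
    have h2 : pAC (a, c) = 0 := le_antisymm (hc ▸ hm6 a c) (hACnn _)
    show pT t * pC c = pAC (a, c) * pBC (b, c)
    rw [h1, h2]; ring
  · have htS' : t ∈ S' := by
      simp only [hS', Finset.mem_filter, Finset.mem_univ, true_and]
      exact hc
    have hqt : q t = pT t := by
      by_cases hts : t ∈ S
      · exact hqT t hts
      · have h0 : pT t = 0 := by
          by_contra h
          exact hts (by simp only [hS, Finset.mem_filter, Finset.mem_univ, true_and]; exact h)
        rw [h0]
        exact hqzero t htS' hts
    show pT t * pC c = pAC (a, c) * pBC (b, c)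
    rw [← hqt]
    show pAC (a, c) * pBC (b, c) / pC c * pC c = pAC (a, c) * pBC (b, c)
    field_simp

lemma cmi_nonneg (hp : ∀ ω, 0 ≤ p ω) (hsum : ∑ ω, p ω = 1)
    (A : Ω → α) (B : Ω → β) (C : Ω → γ) : 0 ≤ cmi p A B C :=
  (cmi_core p hp hsum A B C).1

lemma cmi_eq_zero_fact (hp : ∀ ω, 0 ≤ p ω) (hsum : ∑ ω, p ω = 1)
    {A : Ω → α} {B : Ω → β} {C : Ω → γ} (h : cmi p A B C = 0) :
    ∀ a b c, prob p (fun ω => (A ω, B ω, C ω)) (a, b, c) * prob p C c =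
      prob p (fun ω => (A ω, C ω)) (a, c) * prob p (fun ω => (B ω, C ω)) (b, c) :=
  (cmi_core p hp hsum A B C).2 h

lemma cmi_eq_zero_of_fact (hp : ∀ ω, 0 ≤ p ω)
    {A : Ω → α} {B : Ω → β} {C : Ω → γ}
    (h : ∀ a b c, prob p (fun ω => (A ω, B ω, C ω)) (a, b, c) * prob p C c =
      prob p (fun ω => (A ω, C ω)) (a, c) * prob p (fun ω => (B ω, C ω)) (b, c)) :
    cmi p A B C = 0 := by
  rw [cmi_expand p A B C]
  apply Finset.sum_eq_zero
  rintro ⟨a, b, c⟩ -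
  by_cases h0 : prob p (fun ω => (A ω, B ω, C ω)) (a, b, c) = 0
  · rw [h0]; ring
  · have hTpos : 0 < prob p (fun ω => (A ω, B ω, C ω)) (a, b, c) :=
      lt_of_le_of_ne (prob_nonneg p hp _ _) (Ne.symm h0)
    have hACpos : 0 < prob p (fun ω => (A ω, C ω)) (a, c) :=
      lt_of_lt_of_le hTpos (le_prob_comp p hp (fun ω => (A ω, B ω, C ω)) (fun t => (t.1, t.2.2)) (a, b, c))
    have hBCpos : 0 < prob p (fun ω => (B ω, C ω)) (b, c) :=
      lt_of_lt_of_le hTpos (le_prob_comp p hp (fun ω => (A ω, B ω, C ω)) (fun t => t.2) (a, b, c))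
    have hCpos : 0 < prob p C c :=
      lt_of_lt_of_le hTpos (le_prob_comp p hp (fun ω => (A ω, B ω, C ω)) (fun t => t.2.2) (a, b, c))
    have hlog : Real.logb 2 (prob p (fun ω => (A ω, B ω, C ω)) (a, b, c)) + Real.logb 2 (prob p C c)
        = Real.logb 2 (prob p (fun ω => (A ω, C ω)) (a, c)) + Real.logb 2 (prob p (fun ω => (B ω, C ω)) (b, c)) := by
      rw [← Real.logb_mul (ne_of_gt hTpos) (ne_of_gt hCpos),
        ← Real.logb_mul (ne_of_gt hACpos) (ne_of_gt hBCpos), h a b c]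
    simp only []
    rw [show ∀ x y z w : ℝ, x + y - z - w = (x + y) - (z + w) from fun x y z w => by ring, hlog]
    ring

end Core

section Ident

variable (p : Ω → ℝ)
variable {α' β' γ' δ : Type*}
variable [Fintype α] [DecidableEq α] [Fintype β] [DecidableEq β] [Fintype γ] [DecidableEq γ]
variable [Fintype δ] [DecidableEq δ]

lemma cmi_congr [Fintype α] [DecidableEq α] [Fintype β] [DecidableEq β] [Fintype γ] [DecidableEq γ]
    {A A' : Ω → α} {B B' : Ω → β} {C C' : Ω → γ}
    (hA : ∀ ω, p ω ≠ 0 → A ω = A' ω) (hB : ∀ ω, p ω ≠ 0 → B ω = B' ω)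
    (hC : ∀ ω, p ω ≠ 0 → C ω = C' ω) :
    cmi p A B C = cmi p A' B' C' := by
  unfold cmi
  rw [ent_congr p (W := fun ω => (A ω, C ω)) (W' := fun ω => (A' ω, C' ω))
      (fun ω hω => by rw [hA ω hω, hC ω hω]),
    ent_congr p (W := fun ω => (B ω, C ω)) (W' := fun ω => (B' ω, C' ω))
      (fun ω hω => by rw [hB ω hω, hC ω hω]),
    ent_congr p (W := fun ω => (A ω, B ω, C ω)) (W' := fun ω => (A' ω, B' ω, C' ω))
      (fun ω hω => by rw [hA ω hω, hB ω hω, hC ω hω]),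
    ent_congr p hC]

lemma condEnt_congr {A A' : Ω → α} {C C' : Ω → γ}
    (hA : ∀ ω, p ω ≠ 0 → A ω = A' ω) (hC : ∀ ω, p ω ≠ 0 → C ω = C' ω) :
    condEnt p A C = condEnt p A' C' := by
  unfold condEnt
  rw [ent_congr p (W := fun ω => (A ω, C ω)) (W' := fun ω => (A' ω, C' ω))
      (fun ω hω => by rw [hA ω hω, hC ω hω]),
    ent_congr p hC]

lemma cmi_comm (A : Ω → α) (B : Ω → β) (C : Ω → γ) :
    cmi p A B C = cmi p B A C := by
  have h1 : ent p (fun ω => (B ω, A ω, C ω)) = ent p (fun ω => (A ω, B ω, C ω)) :=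
    ent_comp_inj p (e := fun t : α × β × γ => (t.2.1, t.1, t.2.2))
      (by rintro ⟨a, b, c⟩ ⟨a', b', c'⟩ h; simp_all) (fun ω => (A ω, B ω, C ω))
  unfold cmi
  rw [h1]
  ring

lemma cmi_eq_condEnt_sub (A : Ω → α) (B : Ω → β) (C : Ω → γ) :
    cmi p A B C = condEnt p A C - condEnt p A (fun ω => (B ω, C ω)) := by
  have h1 : ent p (fun ω => (A ω, B ω, C ω)) = ent p (fun ω => (A ω, (B ω, C ω))) := rfl
  unfold cmi condEnt
  rw [h1]
  ring

lemma condEnt_chain (A : Ω → α) (B : Ω → β) (C : Ω → γ) :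
    condEnt p (fun ω => (A ω, B ω)) C
      = condEnt p A (fun ω => (B ω, C ω)) + condEnt p B C := by
  have h1 : ent p (fun ω => ((A ω, B ω), C ω)) = ent p (fun ω => (A ω, (B ω, C ω))) :=
    (ent_comp_inj p (e := fun t : α × β × γ => ((t.1, t.2.1), t.2.2))
      (by rintro ⟨a, b, c⟩ ⟨a', b', c'⟩ h; simp_all) (fun ω => (A ω, B ω, C ω)))
  unfold condEnt
  rw [h1]
  ring

lemma cmi_chain (A : Ω → α) (B1 : Ω → β) (B2 : Ω → δ) (C : Ω → γ) :
    cmi p A (fun ω => (B1 ω, B2 ω)) C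
      = cmi p A B2 C + cmi p A B1 (fun ω => (B2 ω, C ω)) := by
  have h1 : ent p (fun ω => (A ω, (B2 ω, C ω))) = ent p (fun ω => (A ω, B2 ω, C ω)) := rfl
  have h2 : ent p (fun ω => (B1 ω, (B2 ω, C ω))) = ent p (fun ω => ((B1 ω, B2 ω), C ω)) :=
    (ent_comp_inj p (e := fun t : β × δ × γ => ((t.1, t.2.1), t.2.2))
      (by rintro ⟨a, b, c⟩ ⟨a', b', c'⟩ h; simp_all) (fun ω => (B1 ω, B2 ω, C ω))).symm
  have h3 : ent p (fun ω => (A ω, B1 ω, (B2 ω, C ω)))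
      = ent p (fun ω => (A ω, (B1 ω, B2 ω), C ω)) :=
    (ent_comp_inj p (e := fun t : α × β × δ × γ => (t.1, (t.2.1, t.2.2.1), t.2.2.2))
      (by rintro ⟨a, b, c, d⟩ ⟨a', b', c', d'⟩ h; simp_all) (fun ω => (A ω, B1 ω, B2 ω, C ω))).symm
  unfold cmi
  rw [h1, h2, h3]
  ring

lemma condEnt_nonneg (hp : ∀ ω, 0 ≤ p ω) (hsum : ∑ ω, p ω = 1)
    (A : Ω → α) (C : Ω → γ) : 0 ≤ condEnt p A C := by
  have h := cmi_nonneg p hp hsum A A C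
  have h1 : ent p (fun ω => (A ω, A ω, C ω)) = ent p (fun ω => (A ω, C ω)) :=
    ent_comp_inj p (e := fun t : α × γ => (t.1, t.1, t.2))
      (by rintro ⟨a, c⟩ ⟨a', c'⟩ h; simp_all) (fun ω => (A ω, C ω))
  unfold cmi at h
  rw [h1] at h
  unfold condEnt
  linarith

lemma condEnt_le_ent (hp : ∀ ω, 0 ≤ p ω) (hsum : ∑ ω, p ω = 1)
    (A : Ω → α) (C : Ω → γ) : condEnt p A C ≤ ent p A := by
  have h := cmi_nonneg p hp hsum A C (fun _ => (0 : Fin 1))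
  have h1 : ent p (fun ω => (A ω, (fun _ : Ω => (0 : Fin 1)) ω)) = ent p A :=
    ent_comp_inj p (e := fun a : α => (a, (0 : Fin 1)))
      (by rintro a a' h; simp_all) A
  have h2 : ent p (fun ω => (C ω, (fun _ : Ω => (0 : Fin 1)) ω)) = ent p C :=
    ent_comp_inj p (e := fun c : γ => (c, (0 : Fin 1)))
      (by rintro a a' h; simp_all) C
  have h3 : ent p (fun ω => (A ω, C ω, (fun _ : Ω => (0 : Fin 1)) ω))
      = ent p (fun ω => (A ω, C ω)) :=
    ent_comp_inj p (e := fun t : α × γ => (t.1, t.2, (0 : Fin 1)))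
      (by rintro ⟨a, c⟩ ⟨a', c'⟩ h; simp_all) (fun ω => (A ω, C ω))
  have h4 : ent p (fun _ : Ω => (0 : Fin 1)) = 0 := by
    unfold ent
    rw [show (∑ a : Fin 1, prob p (fun _ : Ω => (0 : Fin 1)) a *
        Real.logb 2 (prob p (fun _ : Ω => (0 : Fin 1)) a))
      = prob p (fun _ : Ω => (0 : Fin 1)) 0 *
        Real.logb 2 (prob p (fun _ : Ω => (0 : Fin 1)) 0) from by
        rw [Fin.sum_univ_one]]
    have : prob p (fun _ : Ω => (0 : Fin 1)) 0 = 1 := by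
      unfold prob
      simpa using hsum
    rw [this]
    simp
  unfold cmi at h
  rw [h1, h2, h3, h4] at h
  unfold condEnt
  linarith

lemma cmi_dpi (hp : ∀ ω, 0 ≤ p ω) (hsum : ∑ ω, p ω = 1)
    (A : Ω → α) (B : Ω → β) (C : Ω → γ) (h : β × γ → δ) :
    cmi p A (fun ω => h (B ω, C ω)) C ≤ cmi p A B C := by
  have hnn := cmi_nonneg p hp hsum A B (fun ω => (h (B ω, C ω), C ω))
  have h1 : ent p (fun ω => (B ω, (h (B ω, C ω), C ω))) = ent p (fun ω => (B ω, C ω)) :=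
    ent_comp_inj p (e := fun t : β × γ => (t.1, (h (t.1, t.2), t.2)))
      (by rintro ⟨b, c⟩ ⟨b', c'⟩ hh; simp_all) (fun ω => (B ω, C ω))
  have h2 : ent p (fun ω => (A ω, B ω, (h (B ω, C ω), C ω)))
      = ent p (fun ω => (A ω, B ω, C ω)) :=
    ent_comp_inj p (e := fun t : α × β × γ => (t.1, t.2.1, (h (t.2.1, t.2.2), t.2.2)))
      (by rintro ⟨a, b, c⟩ ⟨a', b', c'⟩ hh; simp_all) (fun ω => (A ω, B ω, C ω))
  have h3 : ent p (fun ω => (A ω, (h (B ω, C ω), C ω)))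
      = ent p (fun ω => (A ω, h (B ω, C ω), C ω)) := rfl
  have h4 : ent p (fun ω => (h (B ω, C ω), C ω))
      = ent p (fun ω => (h (B ω, C ω), C ω)) := rfl
  unfold cmi at hnn ⊢
  rw [h1, h2, h3] at hnn
  linarith

lemma cmi_dup_left (A : Ω → α) (f : α → δ) (B : Ω → β) (C : Ω → γ) :
    cmi p (fun ω => (A ω, f (A ω))) B C = cmi p A B C := by
  have h1 : ent p (fun ω => ((A ω, f (A ω)), C ω)) = ent p (fun ω => (A ω, C ω)) :=
    ent_comp_inj p (e := fun t : α × γ => ((t.1, f t.1), t.2))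
      (by rintro ⟨a, c⟩ ⟨a', c'⟩ h; simp_all) (fun ω => (A ω, C ω))
  have h2 : ent p (fun ω => ((A ω, f (A ω)), B ω, C ω)) = ent p (fun ω => (A ω, B ω, C ω)) :=
    ent_comp_inj p (e := fun t : α × β × γ => ((t.1, f t.1), t.2.1, t.2.2))
      (by rintro ⟨a, b, c⟩ ⟨a', b', c'⟩ h; simp_all) (fun ω => (A ω, B ω, C ω))
  unfold cmi
  rw [h1, h2]

lemma cmi_cond_comm (A : Ω → α) (B : Ω → β) (C1 : Ω → γ) (C2 : Ω → δ) :
    cmi p A B (fun ω => (C1 ω, C2 ω)) = cmi p A B (fun ω => (C2 ω, C1 ω)) := by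
  have h1 : ent p (fun ω => (A ω, (C2 ω, C1 ω))) = ent p (fun ω => (A ω, (C1 ω, C2 ω))) :=
    ent_comp_inj p (e := fun t : α × γ × δ => (t.1, (t.2.2, t.2.1)))
      (by rintro ⟨a, c, d⟩ ⟨a', c', d'⟩ h; simp_all) (fun ω => (A ω, (C1 ω, C2 ω)))
  have h2 : ent p (fun ω => (B ω, (C2 ω, C1 ω))) = ent p (fun ω => (B ω, (C1 ω, C2 ω))) :=
    ent_comp_inj p (e := fun t : β × γ × δ => (t.1, (t.2.2, t.2.1)))
      (by rintro ⟨a, c, d⟩ ⟨a', c', d'⟩ h; simp_all) (fun ω => (B ω, (C1 ω, C2 ω)))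
  have h3 : ent p (fun ω => (A ω, B ω, (C2 ω, C1 ω)))
      = ent p (fun ω => (A ω, B ω, (C1 ω, C2 ω))) :=
    ent_comp_inj p (e := fun t : α × β × γ × δ => (t.1, t.2.1, (t.2.2.2, t.2.2.1)))
      (by rintro ⟨a, b, c, d⟩ ⟨a', b', c', d'⟩ h; simp_all) (fun ω => (A ω, B ω, (C1 ω, C2 ω)))
  have h4 : ent p (fun ω => (C2 ω, C1 ω)) = ent p (fun ω => (C1 ω, C2 ω)) :=
    ent_comp_inj p (e := fun t : γ × δ => (t.2, t.1))
      (by rintro ⟨c, d⟩ ⟨c', d'⟩ h; simp_all) (fun ω => (C1 ω, C2 ω))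
  unfold cmi
  rw [h1, h2, h3, h4]

lemma condEnt_cond_inj {κ' : Type*} [Fintype κ] [DecidableEq κ] [Fintype κ'] [DecidableEq κ']
    {e : κ → κ'} (he : Function.Injective e) (A : Ω → α) (W : Ω → κ) :
    condEnt p A (fun ω => e (W ω)) = condEnt p A W := by
  have h1 : ent p (fun ω => (A ω, e (W ω))) = ent p (fun ω => (A ω, W ω)) :=
    ent_comp_inj p (e := fun t : α × κ => (t.1, e t.2))
      (by rintro ⟨a, w⟩ ⟨a', w'⟩ h; simp only [Prod.mk.injEq] at h ⊢
          exact ⟨h.1, he h.2⟩) (fun ω => (A ω, W ω))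
  have h2 : ent p (fun ω => e (W ω)) = ent p W := ent_comp_inj p he W
  unfold condEnt
  rw [h1, h2]

lemma condEnt_left_inj {κ' : Type*} [Fintype κ] [DecidableEq κ] [Fintype κ'] [DecidableEq κ']
    {e : κ → κ'} (he : Function.Injective e) (A : Ω → κ) (W : Ω → γ) :
    condEnt p (fun ω => e (A ω)) W = condEnt p A W := by
  have h1 : ent p (fun ω => (e (A ω), W ω)) = ent p (fun ω => (A ω, W ω)) :=
    ent_comp_inj p (e := fun t : κ × γ => (e t.1, t.2))
      (by rintro ⟨a, w⟩ ⟨a', w'⟩ h; simp only [Prod.mk.injEq] at h ⊢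
          exact ⟨he h.1, h.2⟩) (fun ω => (A ω, W ω))
  unfold condEnt
  rw [h1]

lemma cmi_arg2_comm (A : Ω → α) (B1 : Ω → β) (B2 : Ω → δ) (C : Ω → γ) :
    cmi p A (fun ω => (B1 ω, B2 ω)) C = cmi p A (fun ω => (B2 ω, B1 ω)) C := by
  have h1 : ent p (fun ω => ((B2 ω, B1 ω), C ω)) = ent p (fun ω => ((B1 ω, B2 ω), C ω)) :=
    ent_comp_inj p (e := fun t : (β × δ) × γ => ((t.1.2, t.1.1), t.2))
      (by rintro ⟨⟨b1, b2⟩, c⟩ ⟨⟨b1', b2'⟩, c'⟩ h; simp_all)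
      (fun ω => ((B1 ω, B2 ω), C ω))
  have h2 : ent p (fun ω => (A ω, (B2 ω, B1 ω), C ω))
      = ent p (fun ω => (A ω, (B1 ω, B2 ω), C ω)) :=
    ent_comp_inj p (e := fun t : α × (β × δ) × γ => (t.1, (t.2.1.2, t.2.1.1), t.2.2))
      (by rintro ⟨a, ⟨b1, b2⟩, c⟩ ⟨a', ⟨b1', b2'⟩, c'⟩ h; simp_all)
      (fun ω => (A ω, (B1 ω, B2 ω), C ω))
  unfold cmi
  rw [h1, h2]

end Ident

section Determinism

variable (p : Ω → ℝ)
variable [Fintype α] [DecidableEq α] [Fintype κ] [DecidableEq κ]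

lemma prob_apply_ne_zero (hp : ∀ ω, 0 ≤ p ω) [Fintype τ] [DecidableEq τ]
    (T : Ω → τ) (ω : Ω) (hω : p ω ≠ 0) : prob p T (T ω) ≠ 0 := by
  have hpos : 0 < p ω := lt_of_le_of_ne (hp ω) (Ne.symm hω)
  have : p ω ≤ prob p T (T ω) := by
    unfold prob
    have := Finset.single_le_sum (f := fun ω' => if T ω' = T ω then p ω' else 0)
      (fun ω' _ => by split <;> simp [hp ω']) (Finset.mem_univ ω)
    simpa using this
  linarith

lemma exists_fun_of_condEnt_zero (hp : ∀ ω, 0 ≤ p ω) (hsum : ∑ ω, p ω = 1)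
    [Nonempty α] (A : Ω → α) (W : Ω → κ) (h : condEnt p A W = 0) :
    ∃ φ : κ → α, ∀ ω, p ω ≠ 0 → A ω = φ (W ω) := by
  classical
  set pT := prob p (fun ω => (A ω, W ω)) with hpT
  set pW := prob p W with hpW
  have hTnn : ∀ t, 0 ≤ pT t := prob_nonneg p hp _
  have hWnn : ∀ w, 0 ≤ pW w := prob_nonneg p hp _
  have hTle : ∀ t : α × κ, pT t ≤ pW t.2 := fun t =>
    le_prob_comp p hp (fun ω => (A ω, W ω)) (fun t => t.2) t
  have hentW : ent p W = -∑ t : α × κ, pT t * Real.logb 2 (pW t.2) :=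
    ent_proj p (fun ω => (A ω, W ω)) (fun t => t.2)
  have hentAW : ent p (fun ω => (A ω, W ω)) = -∑ t : α × κ, pT t * Real.logb 2 (pT t) := rfl
  have hzero : ∑ t : α × κ, pT t * (Real.logb 2 (pW t.2) - Real.logb 2 (pT t)) = 0 := by
    unfold condEnt at h
    rw [hentW, hentAW] at h
    simp only [mul_sub]
    rw [Finset.sum_sub_distrib]
    linarith
  have htermnn : ∀ t : α × κ, 0 ≤ pT t * (Real.logb 2 (pW t.2) - Real.logb 2 (pT t)) := by
    intro t
    by_cases h0 : pT t = 0
    · simp [h0]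
    · have hpos : 0 < pT t := lt_of_le_of_ne (hTnn t) (Ne.symm h0)
      have : Real.logb 2 (pT t) ≤ Real.logb 2 (pW t.2) :=
        Real.logb_le_logb_of_le (by norm_num) hpos (hTle t)
      have h2 : 0 ≤ Real.logb 2 (pW t.2) - Real.logb 2 (pT t) := by linarith
      positivity
  have heach : ∀ t : α × κ, pT t ≠ 0 → pT t = pW t.2 := by
    intro t h0
    have := (Finset.sum_eq_zero_iff_of_nonneg (fun t _ => htermnn t)).mp hzero t (Finset.mem_univ t)
    have hpos : 0 < pT t := lt_of_le_of_ne (hTnn t) (Ne.symm h0)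
    have hWpos : 0 < pW t.2 := lt_of_lt_of_le hpos (hTle t)
    have hlog : Real.logb 2 (pW t.2) = Real.logb 2 (pT t) := by
      rcases mul_eq_zero.mp this with h1 | h2
      · exact absurd h1 h0
      · linarith
    exact (Real.logb_injOn_pos (by norm_num : (1:ℝ) < 2)
      (Set.mem_Ioi.mpr hpos) (Set.mem_Ioi.mpr hWpos) hlog.symm)
  have huniq : ∀ (w : κ) (a1 a2 : α), pT (a1, w) ≠ 0 → pT (a2, w) ≠ 0 → a1 = a2 := by
    intro w a1 a2 h1 h2
    by_contra hne
    have hmarg : ∑ a, pT (a, w) = pW w := marg_fst_eq p A W w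
    have hpair : pT (a1, w) + pT (a2, w) ≤ ∑ a, pT (a, w) := by
      have hsub : ({a1, a2} : Finset α) ⊆ Finset.univ := Finset.subset_univ _
      have := Finset.sum_le_sum_of_subset_of_nonneg hsub
        (fun a _ _ => hTnn (a, w))
      rwa [Finset.sum_pair hne] at this
    have e1 : pT (a1, w) = pW w := heach (a1, w) h1
    have e2 : pT (a2, w) = pW w := heach (a2, w) h2
    have hWpos : 0 < pW w :=
      lt_of_lt_of_le (lt_of_le_of_ne (hTnn (a1, w)) (Ne.symm h1)) (hTle (a1, w))
    rw [e1, e2, hmarg] at hpair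
    linarith
  refine ⟨fun w => if h : ∃ a, pT (a, w) ≠ 0 then h.choose else Classical.arbitrary α, ?_⟩
  intro ω hω
  have hx : pT (A ω, W ω) ≠ 0 := prob_apply_ne_zero p hp (fun ω' => (A ω', W ω')) ω hω
  have hex : ∃ a, pT (a, W ω) ≠ 0 := ⟨A ω, hx⟩
  simp only [dif_pos hex]
  exact huniq (W ω) (A ω) hex.choose hx hex.choose_spec

end Determinism

section DoubleMarkov

variable (p : Ω → ℝ)
variable {ρ : Type*}
variable [Fintype α] [DecidableEq α] [Fintype γ] [DecidableEq γ] [Fintype ρ] [DecidableEq ρ]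

/-- The connectivity relation on `α` induced by the joint distribution of `X` and `Z`. -/
def conRel (X : Ω → α) (Z : Ω → γ) : α → α → Prop :=
  fun x x' => ∃ z, prob p (fun ω => (X ω, Z ω)) (x, z) ≠ 0 ∧
    prob p (fun ω => (X ω, Z ω)) (x', z) ≠ 0

lemma double_markov (hp : ∀ ω, 0 ≤ p ω) (hsum : ∑ ω, p ω = 1)
    (X : Ω → α) (Z : Ω → γ) (V : Ω → ρ) (f : α → α)
    (hfiber : ∀ x x', f x = f x' → Relation.EqvGen (conRel p X Z) x x')
    (h1 : cmi p V Z X = 0) (h2 : cmi p V X Z = 0) :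
    cmi p X V (fun ω => f (X ω)) = 0 := by
  classical
  set pXZ := prob p (fun ω => (X ω, Z ω)) with hpXZ
  set pX := prob p X with hpX
  set pZ := prob p Z with hpZ
  set pVX := prob p (fun ω => (V ω, X ω)) with hpVX
  set pVZ := prob p (fun ω => (V ω, Z ω)) with hpVZ
  set pXV := prob p (fun ω => (X ω, V ω)) with hpXV
  -- facts from the two Markov conditions
  have f1 := cmi_eq_zero_fact p hp hsum h1
  have f2 := cmi_eq_zero_fact p hp hsum h2
  -- tuple reorderings
  have hVZX : ∀ v z x, prob p (fun ω => (V ω, Z ω, X ω)) (v, z, x)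
      = prob p (fun ω => (V ω, X ω, Z ω)) (v, x, z) := fun v z x =>
    prob_comp_inj p (e := fun t : ρ × α × γ => (t.1, t.2.2, t.2.1))
      (by rintro ⟨a, b, c⟩ ⟨a', b', c'⟩ h; simp_all) (fun ω => (V ω, X ω, Z ω)) (v, x, z)
  have hZX : ∀ z x, prob p (fun ω => (Z ω, X ω)) (z, x) = pXZ (x, z) := fun z x =>
    prob_comp_inj p (e := fun t : α × γ => (t.2, t.1))
      (by rintro ⟨a, b⟩ ⟨a', b'⟩ h; simp_all) (fun ω => (X ω, Z ω)) (x, z)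
  have hXVsw : ∀ x v, pXV (x, v) = pVX (v, x) := fun x v =>
    prob_comp_inj p (e := fun t : ρ × α => (t.2, t.1))
      (by rintro ⟨a, b⟩ ⟨a', b'⟩ h; simp_all) (fun ω => (V ω, X ω)) (v, x)
  -- marginal bounds
  have hXZ_le_X : ∀ x z, pXZ (x, z) ≤ pX x := fun x z =>
    le_prob_comp p hp (fun ω => (X ω, Z ω)) (fun w => w.1) (x, z)
  have hXZ_le_Z : ∀ x z, pXZ (x, z) ≤ pZ z := fun x z =>
    le_prob_comp p hp (fun ω => (X ω, Z ω)) (fun w => w.2) (x, z)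
  have hVX_le_X : ∀ v x, pVX (v, x) ≤ pX x := fun v x =>
    le_prob_comp p hp (fun ω => (V ω, X ω)) (fun w => w.2) (v, x)
  have hXZnn : ∀ w, 0 ≤ pXZ w := prob_nonneg p hp _
  have hXnn : ∀ x, 0 ≤ pX x := prob_nonneg p hp _
  have hVXnn : ∀ w, 0 ≤ pVX w := prob_nonneg p hp _
  -- key pointwise relation on edges
  have hE : ∀ v x z, pXZ (x, z) ≠ 0 → pVX (v, x) * pZ z = pVZ (v, z) * pX x := by
    intro v x z hxz
    have a1 := f1 v z x
    have a2 := f2 v x z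
    rw [hVZX, hZX] at a1
    -- a1 : pVXZ (v,x,z) * pX x = pVX (v,x) * pXZ (x,z)
    -- a2 : pVXZ (v,x,z) * pZ z = pVZ (v,z) * pXZ (x,z)
    have key : (pVX (v, x) * pZ z) * pXZ (x, z) = (pVZ (v, z) * pX x) * pXZ (x, z) := by
      calc (pVX (v, x) * pZ z) * pXZ (x, z)
          = (pVX (v, x) * pXZ (x, z)) * pZ z := by ring
        _ = (prob p (fun ω => (V ω, X ω, Z ω)) (v, x, z) * pX x) * pZ z := by rw [← a1]
        _ = (prob p (fun ω => (V ω, X ω, Z ω)) (v, x, z) * pZ z) * pX x := by ring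
        _ = (pVZ (v, z) * pXZ (x, z)) * pX x := by rw [a2]
        _ = (pVZ (v, z) * pX x) * pXZ (x, z) := by ring
    exact mul_right_cancel₀ hxz key
  -- the claim: pVX(·, x)/pX x is constant on connected components
  have claim : ∀ x x', Relation.EqvGen (conRel p X Z) x x' →
      x = x' ∨ (pX x ≠ 0 ∧ pX x' ≠ 0 ∧ ∀ v, pVX (v, x) * pX x' = pVX (v, x') * pX x) := by
    intro x x' h
    induction h with
    | rel x y hr =>
      right
      obtain ⟨z, hz1, hz2⟩ := hr
      have hx : pX x ≠ 0 := fun h0 => hz1 (le_antisymm (h0 ▸ hXZ_le_X x z) (hXZnn _))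
      have hy : pX y ≠ 0 := fun h0 => hz2 (le_antisymm (h0 ▸ hXZ_le_X y z) (hXZnn _))
      have hzz : pZ z ≠ 0 := fun h0 => hz1 (le_antisymm (h0 ▸ hXZ_le_Z x z) (hXZnn _))
      refine ⟨hx, hy, fun v => ?_⟩
      have e1 := hE v x z hz1
      have e2 := hE v y z hz2
      have : (pVX (v, x) * pX y) * pZ z = (pVX (v, y) * pX x) * pZ z := by
        calc (pVX (v, x) * pX y) * pZ z = (pVX (v, x) * pZ z) * pX y := by ring
          _ = (pVZ (v, z) * pX x) * pX y := by rw [e1]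
          _ = (pVZ (v, z) * pX y) * pX x := by ring
          _ = (pVX (v, y) * pZ z) * pX x := by rw [e2]
          _ = (pVX (v, y) * pX x) * pZ z := by ring
      exact mul_right_cancel₀ hzz this
    | refl x => exact Or.inl rfl
    | symm x y _ ih =>
      rcases ih with h | ⟨hx, hy, hv⟩
      · exact Or.inl h.symm
      · exact Or.inr ⟨hy, hx, fun v => (hv v).symm⟩
    | trans x y z _ _ ih1 ih2 =>
      rcases ih1 with h | ⟨hx, hy, hv1⟩
      · rw [h]; exact ih2
      · rcases ih2 with h | ⟨hy', hz, hv2⟩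
        · rw [← h]; exact Or.inr ⟨hx, hy, hv1⟩
        · refine Or.inr ⟨hx, hz, fun v => ?_⟩
          have : (pVX (v, x) * pX z) * pX y = (pVX (v, z) * pX x) * pX y := by
            calc (pVX (v, x) * pX z) * pX y = (pVX (v, x) * pX y) * pX z := by ring
              _ = (pVX (v, y) * pX x) * pX z := by rw [hv1 v]
              _ = (pVX (v, y) * pX z) * pX x := by ring
              _ = (pVX (v, z) * pX y) * pX x := by rw [hv2 v]
              _ = (pVX (v, z) * pX x) * pX y := by ring
          exact mul_right_cancel₀ hy this
  -- now prove the factorization for the triple (X, V, f ∘ X)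
  apply cmi_eq_zero_of_fact p hp
  intro x v c
  -- compute all four probabilities
  have hT : prob p (fun ω => (X ω, V ω, f (X ω))) (x, v, c)
      = if f x = c then pXV (x, v) else 0 := by
    rw [prob_comp_eq_sum p (fun ω => (X ω, V ω)) (fun w => (w.1, w.2, f w.1)) (x, v, c)]
    rw [show (fun w : α × ρ => if (w.1, w.2, f w.1) = (x, v, c) then pXV w else 0)
        = fun w => if w = (x, v) then (if f x = c then pXV w else 0) else 0 from by
      funext w
      rcases w with ⟨x', v'⟩
      by_cases h1 : (x', v') = (x, v)
      · have hx' : x' = x := congrArg Prod.fst h1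
        have hv' : v' = v := congrArg Prod.snd h1
        subst hx'; subst hv'
        simp only [if_pos rfl]
        simp [Prod.ext_iff]
      · simp only [h1, if_false]
        have : ¬((x', v', f x') = (x, v, c)) ∨ ((x', v', f x') = (x, v, c)) := em _ |>.symm
        by_cases h2 : (x', v', f x') = (x, v, c)
        · exfalso; apply h1; simp [Prod.ext_iff] at h2 ⊢; exact ⟨h2.1, h2.2.1⟩
        · simp [h2]]
    rw [Finset.sum_ite_eq' Finset.univ (x, v)
      (fun w => if f x = c then pXV w else 0)]
    simp
  have hXC : prob p (fun ω => (X ω, f (X ω))) (x, c) = if f x = c then pX x else 0 := by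
    rw [prob_comp_eq_sum p X (fun x' => (x', f x')) (x, c)]
    rw [show (fun x' : α => if (x', f x') = (x, c) then pX x' else 0)
        = fun x' => if x' = x then (if f x = c then pX x' else 0) else 0 from by
      funext x'
      by_cases h1 : x' = x
      · subst h1; simp [Prod.ext_iff]
      · have h2 : ¬((x', f x') = (x, c)) := by simp [Prod.ext_iff]; intro h; exact absurd h h1
        simp [h1, h2]]
    rw [Finset.sum_ite_eq' Finset.univ x (fun x' => if f x = c then pX x' else 0)]
    simp
  have hVC : prob p (fun ω => (V ω, f (X ω))) (v, c)
      = ∑ x', if f x' = c then pXV (x', v) else 0 := by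
    rw [prob_comp_eq_sum p (fun ω => (X ω, V ω)) (fun w => (w.2, f w.1)) (v, c)]
    rw [Fintype.sum_prod_type]
    apply Finset.sum_congr rfl
    intro x' _
    rw [show (fun v' : ρ => if ((x', v').2, f (x', v').1) = (v, c) then pXV (x', v') else 0)
        = fun v' => if v' = v then (if f x' = c then pXV (x', v') else 0) else 0 from by
      funext v'
      by_cases h1 : v' = v
      · subst h1; simp [Prod.ext_iff, and_comm]
      · have h2 : ¬((v', f x') = (v, c)) := by simp [Prod.ext_iff]; intro h; exact absurd h h1
        simp [h1, h2]]
    rw [Finset.sum_ite_eq' Finset.univ v (fun v' => if f x' = c then pXV (x', v') else 0)]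
    simp
  have hC : prob p (fun ω => f (X ω)) c = ∑ x', if f x' = c then pX x' else 0 :=
    prob_comp_eq_sum p X f c
  rw [hT, hXC, hVC, hC]
  by_cases hfx : f x = c
  · simp only [hfx, if_true]
    rw [Finset.mul_sum, Finset.mul_sum]
    apply Finset.sum_congr rfl
    intro x' _
    by_cases hfx' : f x' = c
    · simp only [hfx', if_true]
      have hconn : Relation.EqvGen (conRel p X Z) x x' := hfiber x x' (by rw [hfx, hfx'])
      rcases claim x x' hconn with h | ⟨hx, hx', hv⟩
      · subst h; ring
      · have := hv v
        rw [hXVsw, hXVsw]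
        calc pVX (v, x) * pX x' = pVX (v, x') * pX x := this
          _ = pX x * pVX (v, x') := by ring
    · simp [hfx']
  · simp [hfx]

end DoubleMarkov

end Stmt9Aux

open Stmt9Aux

theorem stmt9 {Ω : Type*} [Fintype Ω] {α β γ μ ν ρ : Type*}
    [Fintype α] [DecidableEq α] [Fintype β] [DecidableEq β] [Fintype γ] [DecidableEq γ]
    [Fintype μ] [DecidableEq μ] [Fintype ν] [DecidableEq ν] [Fintype ρ] [DecidableEq ρ]
    (p : Ω → ℝ) (hp : ∀ ω, 0 ≤ p ω) (hsum : ∑ ω, p ω = 1)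
    (X : Ω → α) (Y : Ω → β) (Z : Ω → γ)
    (M12 : Ω → μ) (M23 : Ω → ν) (M31 : Ω → ρ)
    (hcorX : condEnt p X (fun ω => (M12 ω, M31 ω)) = 0)
    (hcorY : condEnt p Y (fun ω => (M12 ω, M23 ω)) = 0)
    (hcorZ : condEnt p Z (fun ω => (M23 ω, M31 ω)) = 0)
    (hprivA : cmi p (fun ω => (M12 ω, M31 ω)) (fun ω => (Y ω, Z ω)) X = 0)
    (hprivC : cmi p (fun ω => (M23 ω, M31 ω)) (fun ω => (X ω, Y ω)) Z = 0) :
    ent p M23 ≥ RI p X Z + condEnt p (fun ω => (Y ω, Z ω)) X := by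
  classical
  -- nonemptiness
  have hω0 : ∃ ω, p ω ≠ 0 := by
    by_contra h
    push_neg at h
    rw [Finset.sum_eq_zero (fun ω _ => h ω)] at hsum
    norm_num at hsum
  obtain ⟨ω0, hω0⟩ := hω0
  have : Nonempty α := ⟨X ω0⟩
  have : Nonempty γ := ⟨Z ω0⟩
  -- extract determinism functions
  obtain ⟨xh, hxh⟩ := exists_fun_of_condEnt_zero p hp hsum X (fun ω => (M12 ω, M31 ω)) hcorX
  obtain ⟨zh, hzh⟩ := exists_fun_of_condEnt_zero p hp hsum Z (fun ω => (M23 ω, M31 ω)) hcorZ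
  set X' : Ω → α := fun ω => xh (M12 ω, M31 ω) with hX'def
  set Z' : Ω → γ := fun ω => zh (M23 ω, M31 ω) with hZ'def
  have hX' : ∀ ω, p ω ≠ 0 → X ω = X' ω := hxh
  have hZ' : ∀ ω, p ω ≠ 0 → Z ω = Z' ω := hzh
  -- the common part
  set Sd : Setoid α := Relation.EqvGen.setoid (conRel p X Z) with hSd
  set f : α → α := fun x => (Quotient.mk Sd x).out with hfdef
  have hf : ∀ x x', f x = f x' ↔ Relation.EqvGen (conRel p X Z) x x' := by
    intro x x'
    constructor
    · intro h
      exact Quotient.exact (Quotient.out_inj.mp h)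
    · intro h
      show (Quotient.mk Sd x).out = (Quotient.mk Sd x').out
      have : (Quotient.mk Sd x) = Quotient.mk Sd x' := Quotient.sound h
      rw [this]
  set g : γ → α := fun z =>
    if h : ∃ x, prob p (fun ω => (X ω, Z ω)) (x, z) ≠ 0 then f h.choose
    else f (Classical.arbitrary α) with hgdef
  have hfg : ∀ ω, p ω ≠ 0 → f (X ω) = g (Z ω) := by
    intro ω hω
    have hx : prob p (fun ω' => (X ω', Z ω')) (X ω, Z ω) ≠ 0 :=
      prob_apply_ne_zero p hp (fun ω' => (X ω', Z ω')) ω hω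
    have hex : ∃ x, prob p (fun ω' => (X ω', Z ω')) (x, Z ω) ≠ 0 := ⟨X ω, hx⟩
    rw [hgdef]
    simp only [dif_pos hex]
    apply (hf _ _).mpr
    exact Relation.EqvGen.rel _ _ ⟨Z ω, hx, hex.choose_spec⟩
  set C : Ω → α := fun ω => f (X ω) with hCdef
  set C' : Ω → α := fun ω => f (X' ω) with hC'def
  have hCC' : ∀ ω, p ω ≠ 0 → C ω = C' ω := fun ω hω => by
    simp only [hCdef, hC'def]; rw [hX' ω hω]
  -- RI is at most cmi p X Z C
  have hRI : RI p X Z ≤ cmi p X Z C := by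
    apply csInf_le
    · refine ⟨0, ?_⟩
      rintro r ⟨f', g', hfg', rfl⟩
      exact cmi_nonneg p hp hsum _ _ _
    · exact ⟨f, g, hfg, rfl⟩
  -- Step B preliminaries: privacy against Alice/Charlie restricted to M31
  have hA1 : cmi p M31 Z X = 0 := by
    have e1 : cmi p (fun ω => (Y ω, Z ω)) (fun ω => (M12 ω, M31 ω)) X
        = cmi p (fun ω => (M12 ω, M31 ω)) (fun ω => (Y ω, Z ω)) X :=
      cmi_comm p _ _ _
    have e2 : cmi p (fun ω => (Y ω, Z ω)) M31 X
        ≤ cmi p (fun ω => (Y ω, Z ω)) (fun ω => (M12 ω, M31 ω)) X :=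
      cmi_dpi p hp hsum (fun ω => (Y ω, Z ω)) (fun ω => (M12 ω, M31 ω)) X
        (fun w => w.1.2)
    have e3 : cmi p M31 (fun ω => (Y ω, Z ω)) X = cmi p (fun ω => (Y ω, Z ω)) M31 X :=
      cmi_comm p _ _ _
    have e4 : cmi p M31 Z X ≤ cmi p M31 (fun ω => (Y ω, Z ω)) X :=
      cmi_dpi p hp hsum M31 (fun ω => (Y ω, Z ω)) X (fun w => w.1.2)
    have e5 : 0 ≤ cmi p M31 Z X := cmi_nonneg p hp hsum _ _ _
    rw [e1, hprivA] at e2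
    rw [e3] at e4
    linarith
  have hC1 : cmi p M31 X Z = 0 := by
    have e1 : cmi p (fun ω => (X ω, Y ω)) (fun ω => (M23 ω, M31 ω)) Z
        = cmi p (fun ω => (M23 ω, M31 ω)) (fun ω => (X ω, Y ω)) Z :=
      cmi_comm p _ _ _
    have e2 : cmi p (fun ω => (X ω, Y ω)) M31 Z
        ≤ cmi p (fun ω => (X ω, Y ω)) (fun ω => (M23 ω, M31 ω)) Z :=
      cmi_dpi p hp hsum (fun ω => (X ω, Y ω)) (fun ω => (M23 ω, M31 ω)) Z
        (fun w => w.1.2)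
    have e3 : cmi p M31 (fun ω => (X ω, Y ω)) Z = cmi p (fun ω => (X ω, Y ω)) M31 Z :=
      cmi_comm p _ _ _
    have e4 : cmi p M31 X Z ≤ cmi p M31 (fun ω => (X ω, Y ω)) Z :=
      cmi_dpi p hp hsum M31 (fun ω => (X ω, Y ω)) Z (fun w => w.1.1)
    have e5 : 0 ≤ cmi p M31 X Z := cmi_nonneg p hp hsum _ _ _
    rw [e1, hprivC] at e2
    rw [e3] at e4
    linarith
  -- transport to primed variables
  have hA1' : cmi p M31 Z' X' = 0 := by
    have h := cmi_congr p (A := M31) (A' := M31) (B := Z) (B' := Z') (C := X) (C' := X')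
      (fun ω _ => rfl) hZ' hX'
    rw [← h]
    exact hA1
  have hC1' : cmi p M31 X' Z' = 0 := by
    have h := cmi_congr p (A := M31) (A' := M31) (B := X) (B' := X') (C := Z) (C' := Z')
      (fun ω _ => rfl) hX' hZ'
    rw [← h]
    exact hC1
  -- the common part relation is the same for primed variables
  have hprobXZ : prob p (fun ω => (X' ω, Z' ω)) = prob p (fun ω => (X ω, Z ω)) :=
    funext (fun w => prob_congr p (fun ω hω => by
      show (X' ω, Z' ω) = (X ω, Z ω)
      rw [← hX' ω hω, ← hZ' ω hω]) w)
  have hconRel : conRel p X' Z' = conRel p X Z := by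
    unfold conRel
    rw [hprobXZ]
  have hfiber' : ∀ x x', f x = f x' → Relation.EqvGen (conRel p X' Z') x x' := by
    intro x x' h
    rw [hconRel]
    exact (hf x x').mp h
  -- double Markov: I(X'; M31 | C') = 0
  have hdm : cmi p X' M31 C' = 0 :=
    double_markov p hp hsum X' Z' M31 f hfiber' hA1' hC1'
  -- Step B: cmi p M23 M12 M31 ≥ cmi p X Z C
  have hB : cmi p X Z C ≤ cmi p M23 M12 M31 := by
    -- c1 : drop to X'
    have c1 : cmi p M23 X' M31 ≤ cmi p M23 M12 M31 :=
      cmi_dpi p hp hsum M23 M12 M31 (fun w => xh w)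
    -- c2 : drop to Z'
    have c2 : cmi p X' Z' M31 ≤ cmi p X' M23 M31 :=
      cmi_dpi p hp hsum X' M23 M31 (fun w => zh w)
    have c2' : cmi p X' M23 M31 = cmi p M23 X' M31 := cmi_comm p _ _ _
    -- c3 : conditioning on the common part
    have i1 : cmi p X' Z' M31 = cmi p (fun ω => (X' ω, C' ω)) Z' M31 :=
      (cmi_dup_left p X' f Z' M31).symm
    have i2 : cmi p (fun ω => (X' ω, C' ω)) Z' M31
        = cmi p Z' (fun ω => (X' ω, C' ω)) M31 := cmi_comm p _ _ _
    have i3 : cmi p Z' (fun ω => (X' ω, C' ω)) M31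
        = cmi p Z' C' M31 + cmi p Z' X' (fun ω => (C' ω, M31 ω)) :=
      cmi_chain p Z' X' C' M31
    have i4 : 0 ≤ cmi p Z' C' M31 := cmi_nonneg p hp hsum _ _ _
    have i5 : cmi p Z' X' (fun ω => (C' ω, M31 ω))
        = cmi p X' Z' (fun ω => (C' ω, M31 ω)) := cmi_comm p _ _ _
    have i6 : cmi p X' Z' (fun ω => (C' ω, M31 ω))
        = cmi p X' Z' (fun ω => (M31 ω, C' ω)) := cmi_cond_comm p _ _ _ _
    -- chain in the second argument two ways
    have j1 : cmi p X' (fun ω => (Z' ω, M31 ω)) C'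
        = cmi p X' M31 C' + cmi p X' Z' (fun ω => (M31 ω, C' ω)) :=
      cmi_chain p X' Z' M31 C'
    have j2 : cmi p X' (fun ω => (Z' ω, M31 ω)) C'
        = cmi p X' (fun ω => (M31 ω, Z' ω)) C' := cmi_arg2_comm p _ _ _ _
    have j3 : cmi p X' (fun ω => (M31 ω, Z' ω)) C'
        = cmi p X' Z' C' + cmi p X' M31 (fun ω => (Z' ω, C' ω)) :=
      cmi_chain p X' M31 Z' C'
    have j4 : 0 ≤ cmi p X' M31 (fun ω => (Z' ω, C' ω)) := cmi_nonneg p hp hsum _ _ _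
    -- so cmi p X' Z' (M31, C') ≥ cmi p X' Z' C'
    have c3 : cmi p X' Z' C' ≤ cmi p X' Z' M31 := by
      have : cmi p X' Z' C' ≤ cmi p X' Z' (fun ω => (M31 ω, C' ω)) := by
        have := j1
        rw [j2, j3] at this
        rw [hdm] at this
        linarith
      linarith [i4, this, i1, i2, i3, i5, i6]
    -- c4 : transport back
    have c4 : cmi p X Z C = cmi p X' Z' C' :=
      cmi_congr p hX' hZ' hCC'
    linarith
  -- Step A : condEnt p M23 (M12, M31) ≥ condEnt p (Y,Z) X
  have hA : condEnt p (fun ω => (Y ω, Z ω)) X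
      ≤ condEnt p M23 (fun ω => (M12 ω, M31 ω)) := by
    set W : Ω → ν × μ × ρ := fun ω => (M23 ω, (M12 ω, M31 ω)) with hWdef
    -- H(Y | W) = 0
    have dY : condEnt p Y W = 0 := by
      have r1 : condEnt p Y W
          = condEnt p Y (fun ω => (M31 ω, (M12 ω, M23 ω))) := by
        rw [hWdef]
        have h : condEnt p Y (fun ω => (M23 ω, (M12 ω, M31 ω)))
            = condEnt p Y (fun ω => (M31 ω, (M12 ω, M23 ω))) :=
          condEnt_cond_inj p
            (e := fun t : ρ × μ × ν => (t.2.2, (t.2.1, t.1)))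
            (by rintro ⟨a, b, c⟩ ⟨a', b', c'⟩ h; simp_all) Y
            (fun ω => (M31 ω, (M12 ω, M23 ω)))
        exact h
      have r2 : cmi p Y M31 (fun ω => (M12 ω, M23 ω))
          = condEnt p Y (fun ω => (M12 ω, M23 ω))
            - condEnt p Y (fun ω => (M31 ω, (M12 ω, M23 ω))) :=
        cmi_eq_condEnt_sub p Y M31 (fun ω => (M12 ω, M23 ω))
      have r3 : 0 ≤ cmi p Y M31 (fun ω => (M12 ω, M23 ω)) := cmi_nonneg p hp hsum _ _ _
      have r4 : 0 ≤ condEnt p Y (fun ω => (M31 ω, (M12 ω, M23 ω))) :=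
        condEnt_nonneg p hp hsum _ _
      rw [r1]
      rw [hcorY] at r2
      linarith
    -- H(Z | (Y, W)) = 0
    have dZ : condEnt p Z (fun ω => (Y ω, W ω)) = 0 := by
      have r1 : condEnt p Z (fun ω => (Y ω, W ω))
          = condEnt p Z (fun ω => ((Y ω, M12 ω), (M23 ω, M31 ω))) := by
        rw [hWdef]
        have h : condEnt p Z (fun ω => (Y ω, (M23 ω, (M12 ω, M31 ω))))
            = condEnt p Z (fun ω => ((Y ω, M12 ω), (M23 ω, M31 ω))) :=
          (condEnt_cond_inj p
            (e := fun t : (β × μ) × ν × ρ => (t.1.1, (t.2.1, (t.1.2, t.2.2))))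
            (by rintro ⟨⟨a, b⟩, c, d⟩ ⟨⟨a', b'⟩, c', d'⟩ h; simp_all) Z
            (fun ω => ((Y ω, M12 ω), (M23 ω, M31 ω))))
        exact h
      have r2 : cmi p Z (fun ω => (Y ω, M12 ω)) (fun ω => (M23 ω, M31 ω))
          = condEnt p Z (fun ω => (M23 ω, M31 ω))
            - condEnt p Z (fun ω => ((Y ω, M12 ω), (M23 ω, M31 ω))) :=
        cmi_eq_condEnt_sub p Z (fun ω => (Y ω, M12 ω)) (fun ω => (M23 ω, M31 ω))
      have r3 : 0 ≤ cmi p Z (fun ω => (Y ω, M12 ω)) (fun ω => (M23 ω, M31 ω)) :=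
        cmi_nonneg p hp hsum _ _ _
      have r4 : 0 ≤ condEnt p Z (fun ω => ((Y ω, M12 ω), (M23 ω, M31 ω))) :=
        condEnt_nonneg p hp hsum _ _
      rw [r1]
      rw [hcorZ] at r2
      linarith
    -- H((Y,Z) | W) = 0
    have dYZ : condEnt p (fun ω => (Y ω, Z ω)) W = 0 := by
      have r1 : condEnt p (fun ω => (Y ω, Z ω)) W
          = condEnt p (fun ω => (Z ω, Y ω)) W := by
        have h : condEnt p (fun ω => (Y ω, Z ω)) W
            = condEnt p (fun ω => (Z ω, Y ω)) W :=
          condEnt_left_inj p (e := fun t : γ × β => (t.2, t.1))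
            (by rintro ⟨a, b⟩ ⟨a', b'⟩ h; simp_all) (fun ω => (Z ω, Y ω)) W
        exact h
      have r2 : condEnt p (fun ω => (Z ω, Y ω)) W
          = condEnt p Z (fun ω => (Y ω, W ω)) + condEnt p Y W :=
        condEnt_chain p Z Y W
      rw [r1, r2, dZ, dY]
      ring
    -- H(M23 | (M12,M31)) = H((Y,Z),M23 | (M12,M31))
    have d1 : condEnt p (fun ω => ((Y ω, Z ω), M23 ω)) (fun ω => (M12 ω, M31 ω))
        = condEnt p M23 (fun ω => (M12 ω, M31 ω)) := by
      have := condEnt_chain p (fun ω => (Y ω, Z ω)) M23 (fun ω => (M12 ω, M31 ω))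
      rw [show (fun ω => (M23 ω, (M12 ω, M31 ω))) = W from rfl] at this
      rw [this, dYZ]
      ring
    -- H((Y,Z),M23 | (M12,M31)) ≥ H((Y,Z) | (M12,M31))
    have d2 : condEnt p (fun ω => (Y ω, Z ω)) (fun ω => (M12 ω, M31 ω))
        ≤ condEnt p (fun ω => ((Y ω, Z ω), M23 ω)) (fun ω => (M12 ω, M31 ω)) := by
      have r1 : condEnt p (fun ω => ((Y ω, Z ω), M23 ω)) (fun ω => (M12 ω, M31 ω))
          = condEnt p (fun ω => (M23 ω, (Y ω, Z ω))) (fun ω => (M12 ω, M31 ω)) := by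
        have h : condEnt p (fun ω => ((Y ω, Z ω), M23 ω)) (fun ω => (M12 ω, M31 ω))
            = condEnt p (fun ω => (M23 ω, (Y ω, Z ω))) (fun ω => (M12 ω, M31 ω)) :=
          condEnt_left_inj p (e := fun t : ν × (β × γ) => (t.2, t.1))
            (by rintro ⟨a, ⟨b, c⟩⟩ ⟨a', ⟨b', c'⟩⟩ h; simp_all)
            (fun ω => (M23 ω, (Y ω, Z ω))) (fun ω => (M12 ω, M31 ω))
        exact h
      have r2 : condEnt p (fun ω => (M23 ω, (Y ω, Z ω))) (fun ω => (M12 ω, M31 ω))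
          = condEnt p M23 (fun ω => ((Y ω, Z ω), (M12 ω, M31 ω)))
            + condEnt p (fun ω => (Y ω, Z ω)) (fun ω => (M12 ω, M31 ω)) :=
        condEnt_chain p M23 (fun ω => (Y ω, Z ω)) (fun ω => (M12 ω, M31 ω))
      have r3 : 0 ≤ condEnt p M23 (fun ω => ((Y ω, Z ω), (M12 ω, M31 ω))) :=
        condEnt_nonneg p hp hsum _ _
      rw [r1, r2]
      linarith
    -- conditioning on X as well
    have d3 : condEnt p (fun ω => (Y ω, Z ω)) (fun ω => ((M12 ω, M31 ω), X ω))
        ≤ condEnt p (fun ω => (Y ω, Z ω)) (fun ω => (M12 ω, M31 ω)) := by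
      have r1 : cmi p (fun ω => (Y ω, Z ω)) X (fun ω => (M12 ω, M31 ω))
          = condEnt p (fun ω => (Y ω, Z ω)) (fun ω => (M12 ω, M31 ω))
            - condEnt p (fun ω => (Y ω, Z ω)) (fun ω => (X ω, (M12 ω, M31 ω))) :=
        cmi_eq_condEnt_sub p (fun ω => (Y ω, Z ω)) X (fun ω => (M12 ω, M31 ω))
      have r2 : 0 ≤ cmi p (fun ω => (Y ω, Z ω)) X (fun ω => (M12 ω, M31 ω)) :=
        cmi_nonneg p hp hsum _ _ _
      have r3 : condEnt p (fun ω => (Y ω, Z ω)) (fun ω => (X ω, (M12 ω, M31 ω)))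
          = condEnt p (fun ω => (Y ω, Z ω)) (fun ω => ((M12 ω, M31 ω), X ω)) := by
        have h : condEnt p (fun ω => (Y ω, Z ω)) (fun ω => (X ω, (M12 ω, M31 ω)))
            = condEnt p (fun ω => (Y ω, Z ω)) (fun ω => ((M12 ω, M31 ω), X ω)) :=
          condEnt_cond_inj p (e := fun t : (μ × ρ) × α => (t.2, t.1))
            (by rintro ⟨⟨a, b⟩, c⟩ ⟨⟨a', b'⟩, c'⟩ h; simp_all)
            (fun ω => (Y ω, Z ω)) (fun ω => ((M12 ω, M31 ω), X ω))
        exact h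
      rw [← r3]
      linarith
    -- privacy: H((Y,Z) | (M12,M31), X) = H((Y,Z) | X)
    have d4 : condEnt p (fun ω => (Y ω, Z ω)) (fun ω => ((M12 ω, M31 ω), X ω))
        = condEnt p (fun ω => (Y ω, Z ω)) X := by
      have r1 : cmi p (fun ω => (Y ω, Z ω)) (fun ω => (M12 ω, M31 ω)) X
          = condEnt p (fun ω => (Y ω, Z ω)) X
            - condEnt p (fun ω => (Y ω, Z ω)) (fun ω => ((M12 ω, M31 ω), X ω)) :=
        cmi_eq_condEnt_sub p (fun ω => (Y ω, Z ω)) (fun ω => (M12 ω, M31 ω)) X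
      have r2 : cmi p (fun ω => (Y ω, Z ω)) (fun ω => (M12 ω, M31 ω)) X = 0 := by
        rw [cmi_comm p]
        exact hprivA
      rw [r2] at r1
      linarith
    linarith [d1, d2, d3, d4]
  -- final assembly
  have hfin1 : condEnt p M23 M31 ≤ ent p M23 := condEnt_le_ent p hp hsum M23 M31
  have hfin2 : cmi p M23 M12 M31
      = condEnt p M23 M31 - condEnt p M23 (fun ω => (M12 ω, M31 ω)) :=
    cmi_eq_condEnt_sub p M23 M12 M31
  have hcond_nonneg : 0 ≤ condEnt p M23 (fun ω => (M12 ω, M31 ω)) :=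
    condEnt_nonneg p hp hsum _ _
  linarith [hRI, hB, hA, hfin1, hfin2, hcond_nonneg]
end
end

section
/- There exist random variables X, Y, Z, M₁₂, M₂₃, M₃₁ on a discrete probability space such that: X and Y are independent uniform bits; Z = X ∧ Y; each of M₁₂, M₂₃, M₃₁ takes values in a 3-element set; the correctness conditions H(X|M₁₂,M₃₁) = H(Y|M₁₂,M₂₃) = H(Z|M₂₃,M₃₁) = 0 hold; the privacy conditions I(M₁₂,M₃₁; Y,Z | X) = I(M₁₂,M₂₃; X,Z | Y) = I(M₂₃,M₃₁; X,Y | Z) = 0 hold; and H(M₁₂) = H(M₂₃) = H(M₃₁) = log 3. -/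
open scoped BigOperators

noncomputable section

namespace CMSSaux

def per : Fin 6 → Fin 3 × Fin 3 × Fin 3 :=
  ![(0,1,2),(0,2,1),(1,0,2),(1,2,0),(2,0,1),(2,1,0)]

abbrev Om := Bool × Bool × Fin 6

def pp : Om → ℝ := fun _ => 1/24

lemma lb1 : Real.logb 2 (1:ℝ) = 0 := by simp
lemma lb2 : Real.logb 2 ((1:ℝ)/2) = -1 := by
  rw [show ((1:ℝ)/2) = (2:ℝ)⁻¹ by norm_num, Real.logb_inv,
    Real.logb_self_eq_one (by norm_num)]
lemma lb4 : Real.logb 2 ((1:ℝ)/4) = -2 := by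
  rw [show ((1:ℝ)/4) = ((2:ℝ)^(2:ℕ))⁻¹ by norm_num, Real.logb_inv, Real.logb_pow,
    Real.logb_self_eq_one (by norm_num)]; norm_num
lemma lb8 : Real.logb 2 ((1:ℝ)/8) = -3 := by
  rw [show ((1:ℝ)/8) = ((2:ℝ)^(3:ℕ))⁻¹ by norm_num, Real.logb_inv, Real.logb_pow,
    Real.logb_self_eq_one (by norm_num)]; norm_num
lemma lb3 : Real.logb 2 ((1:ℝ)/3) = -Real.logb 2 3 := by
  rw [show ((1:ℝ)/3) = (3:ℝ)⁻¹ by norm_num, Real.logb_inv]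
lemma lb6 : Real.logb 2 ((1:ℝ)/6) = -(1 + Real.logb 2 3) := by
  rw [show ((1:ℝ)/6) = ((2:ℝ)*3)⁻¹ by norm_num, Real.logb_inv,
    Real.logb_mul (by norm_num) (by norm_num), Real.logb_self_eq_one (by norm_num)]
lemma lb12 : Real.logb 2 ((1:ℝ)/12) = -(2 + Real.logb 2 3) := by
  rw [show ((1:ℝ)/12) = ((2:ℝ)^(2:ℕ)*3)⁻¹ by norm_num, Real.logb_inv,
    Real.logb_mul (by norm_num) (by norm_num), Real.logb_pow,
    Real.logb_self_eq_one (by norm_num)]; norm_num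
lemma lb24 : Real.logb 2 ((1:ℝ)/24) = -(3 + Real.logb 2 3) := by
  rw [show ((1:ℝ)/24) = ((2:ℝ)^(3:ℕ)*3)⁻¹ by norm_num, Real.logb_inv,
    Real.logb_mul (by norm_num) (by norm_num), Real.logb_pow,
    Real.logb_self_eq_one (by norm_num)]; norm_num
lemma lb34 : Real.logb 2 ((3:ℝ)/4) = Real.logb 2 3 - 2 := by
  rw [show ((3:ℝ)/4) = (3:ℝ) * ((2:ℝ)^(2:ℕ))⁻¹ by norm_num,
    Real.logb_mul (by norm_num) (by norm_num), Real.logb_inv, Real.logb_pow,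
    Real.logb_self_eq_one (by norm_num)]; ring

end CMSSaux

set_option maxHeartbeats 4000000 in
open CMSSaux in
theorem stmt17 : ∃ (Ω : Type) (_ : Fintype Ω) (p : Ω → ℝ)
    (X Y Z : Ω → Bool) (M12 M23 M31 : Ω → Fin 3),
    (∀ ω, 0 ≤ p ω) ∧ (∑ ω, p ω = 1) ∧
    (∀ a b, prob p (fun ω => (X ω, Y ω)) (a, b) = 1/4) ∧
    (∀ ω, Z ω = (X ω && Y ω)) ∧
    condEnt p X (fun ω => (M12 ω, M31 ω)) = 0 ∧
    condEnt p Y (fun ω => (M12 ω, M23 ω)) = 0 ∧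
    condEnt p Z (fun ω => (M23 ω, M31 ω)) = 0 ∧
    cmi p (fun ω => (M12 ω, M31 ω)) (fun ω => (Y ω, Z ω)) X = 0 ∧
    cmi p (fun ω => (M12 ω, M23 ω)) (fun ω => (X ω, Z ω)) Y = 0 ∧
    cmi p (fun ω => (M23 ω, M31 ω)) (fun ω => (X ω, Y ω)) Z = 0 ∧
    ent p M12 = Real.logb 2 3 ∧ ent p M23 = Real.logb 2 3 ∧
    ent p M31 = Real.logb 2 3 := by
  refine ⟨Om, inferInstance, pp, fun ω => ω.1, fun ω => ω.2.1, fun ω => ω.1 && ω.2.1,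
    fun ω => (per ω.2.2).1,
    fun ω => if ω.2.1 then (per ω.2.2).1 else (per ω.2.2).2.2,
    fun ω => if ω.1 then (per ω.2.2).1 else (per ω.2.2).2.1,
    fun ω => by norm_num [pp], ?_, ?_, fun ω => rfl, ?_, ?_, ?_, ?_, ?_, ?_, ?_, ?_, ?_⟩
  case _ =>
    simp only [pp, Fintype.sum_prod_type, Fin.sum_univ_six, Fintype.sum_bool]
    norm_num
  case _ =>
    intro a b
    cases a <;> cases b <;>
    · simp only [prob, pp, Fintype.sum_prod_type, Fin.sum_univ_six, Fintype.sum_bool,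
        Prod.mk.injEq]
      norm_num
  all_goals
  · simp only [condEnt, cmi, ent, prob, pp]
    simp only [Fintype.sum_prod_type, Fin.sum_univ_six, Fintype.sum_bool, Fin.sum_univ_three,
      show per 0 = (0,1,2) from rfl, show per 1 = (0,2,1) from rfl, show per 2 = (1,0,2) from rfl,
      show per 3 = (1,2,0) from rfl, show per 4 = (2,0,1) from rfl, show per 5 = (2,1,0) from rfl]
    norm_num [Prod.mk.injEq, -Prod.mk_zero_zero, -Prod.mk_one_one,
      show ((2:Fin 3) = 0) = False from by decide, show ((2:Fin 3) = 1) = False from by decide,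
      show ((1:Fin 3) = 0) = False from by decide, show ((0:Fin 3) = 1) = False from by decide,
      show ((0:Fin 3) = 2) = False from by decide, show ((1:Fin 3) = 2) = False from by decide,
      lb1, lb2, lb3, lb4, lb6, lb8, lb12, lb24, lb34]
    try ring
end
end
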